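/- arXiv:1403.0881 — 6 statements merged into one kernel-verified Lean document; each statement's English description precedes it below -/
import Mathlib

section
/- For all integers d ≥ 1, k ≥ 2, n ≥ 0, the inclusion map M_d^{(k)}(n) ↪ M_d^{(k+1)}(n) (a continuous map between subspaces of (ℝ^d)^n, well defined since the no-k-equal condition implies the no-(k+1)-equal condition) is null-homotopic. -/
/-- The no-`k`-equal space `M_d^{(k)}(n)`: tuples of `n` points of `ℝ^d` such that
no `k` of them are all equal. -/
def noKEqual (d k n : ℕ) : Set (Fin n → EuclideanSpace ℝ (Fin d)) :=
  {x | ∀ I : Finset (Fin n), I.card = k → ∃ i ∈ I, ∃ j ∈ I, x i ≠ x j}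

/-- The no-`k`-equal condition implies the no-`(k+1)`-equal condition. -/
lemma noKEqual_subset_succ (d k n : ℕ) : noKEqual d k n ⊆ noKEqual d (k + 1) n := by
  intro x hx I hI
  obtain ⟨t, hts, htc⟩ := Finset.exists_subset_card_eq (s := I) (n := k) (by omega)
  obtain ⟨i, hi, j, hj, hij⟩ := hx t htc
  exact ⟨i, hts hi, j, hts hj, hij⟩

noncomputable def nkCl (r : ℝ) : ℝ := max 0 (min 1 r)

lemma nkCl_nonneg (r : ℝ) : 0 ≤ nkCl r := le_max_left _ _
lemma nkCl_le_one (r : ℝ) : nkCl r ≤ 1 := max_le zero_le_one (min_le_left _ _)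
lemma nkCl_of_nonpos {r : ℝ} (h : r ≤ 0) : nkCl r = 0 :=
  max_eq_left ((min_le_right _ _).trans h)
lemma nkCl_of_one_le {r : ℝ} (h : 1 ≤ r) : nkCl r = 1 := by
  rw [nkCl, min_eq_left h, max_eq_right zero_le_one]
lemma nkCl_pos {r : ℝ} (h : 0 < r) : 0 < nkCl r :=
  lt_of_lt_of_le (lt_min one_pos h) (le_max_right _ _)
lemma lt_one_of_nkCl_lt_one {r : ℝ} (h : nkCl r < 1) : r < 1 := by
  by_contra hr; push_neg at hr; rw [nkCl_of_one_le hr] at h; exact lt_irrefl 1 h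
lemma pos_of_nkCl_pos {r : ℝ} (h : 0 < nkCl r) : 0 < r := by
  by_contra hr; push_neg at hr; rw [nkCl_of_nonpos hr] at h; exact lt_irrefl 0 h

/-- The raw homotopy: at time `s ∈ [i, i+1]`, point `i` travels in a straight line to
the far-away position `(M x + i) • e₁`; at time `s ∈ [n, n+1]` all points slide
simultaneously to the fixed positions `(1 + i) • e₁`. -/
noncomputable def nkH (d n : ℕ) (hd : 1 ≤ d) (s : ℝ)
    (x : Fin n → EuclideanSpace ℝ (Fin d)) : Fin n → EuclideanSpace ℝ (Fin d) :=
  fun i => (1 - nkCl (s - i)) • x i +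
    (nkCl (s - i) * ((1 - nkCl (s - n)) * (1 + ∑ j, ‖x j‖) + nkCl (s - n) + i)) •
      EuclideanSpace.single ⟨0, hd⟩ (1 : ℝ)

lemma nkH_apply_coord (d n : ℕ) (hd : 1 ≤ d) (s : ℝ)
    (x : Fin n → EuclideanSpace ℝ (Fin d)) (i : Fin n) :
    nkH d n hd s x i ⟨0, hd⟩ =
      (1 - nkCl (s - i)) * x i ⟨0, hd⟩ +
        nkCl (s - i) * ((1 - nkCl (s - n)) * (1 + ∑ j, ‖x j‖) + nkCl (s - n) + i) := by
  simp [nkH, PiLp.add_apply, PiLp.smul_apply, EuclideanSpace.single_apply, smul_eq_mul]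

lemma nk_coord_le (d n : ℕ) (hd : 1 ≤ d) (x : Fin n → EuclideanSpace ℝ (Fin d)) (i : Fin n) :
    x i ⟨0, hd⟩ ≤ ∑ j, ‖x j‖ := by
  have h1 : x i ⟨0, hd⟩ ≤ ‖x i‖ := by
    calc x i ⟨0, hd⟩ ≤ |x i ⟨0, hd⟩| := le_abs_self _
      _ = Real.sqrt ((x i ⟨0, hd⟩) ^ 2) := (Real.sqrt_sq_eq_abs _).symm
      _ ≤ Real.sqrt (∑ j, ‖x i j‖ ^ 2) := by
          apply Real.sqrt_le_sqrt
          have h2 : ∀ j : Fin d, (0:ℝ) ≤ ‖x i j‖ ^ 2 := fun j => sq_nonneg _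
          have h3 := Finset.single_le_sum (f := fun j : Fin d => ‖x i j‖ ^ 2)
            (fun j _ => h2 j) (Finset.mem_univ (⟨0, hd⟩ : Fin d))
          simpa [Real.norm_eq_abs, sq_abs] using h3
      _ = ‖x i‖ := (EuclideanSpace.norm_eq _).symm
  exact h1.trans (Finset.single_le_sum (fun j _ => norm_nonneg _) (Finset.mem_univ i))

lemma nkH_of_cl_zero (d n : ℕ) (hd : 1 ≤ d) (s : ℝ)
    (x : Fin n → EuclideanSpace ℝ (Fin d)) (i : Fin n) (h : nkCl (s - i) = 0) :
    nkH d n hd s x i = x i := by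
  simp [nkH, h]

lemma nkH_mem (d k n : ℕ) (hd : 1 ≤ d) (hk : 2 ≤ k) (s : ℝ)
    (x : Fin n → EuclideanSpace ℝ (Fin d)) (hx : x ∈ noKEqual d k n) :
    nkH d n hd s x ∈ noKEqual d (k + 1) n := by
  classical
  intro I hI
  by_contra hcon
  push_neg at hcon
  set M : ℝ := 1 + ∑ j, ‖x j‖ with hM
  set U := I.filter (fun i : Fin n => nkCl (s - i) = 0) with hU
  set A := I.filter (fun i : Fin n => nkCl (s - i) = 1) with hA
  set Mv := I.filter (fun i : Fin n => nkCl (s - i) ≠ 0 ∧ nkCl (s - i) ≠ 1) with hMv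
  have hsub : I ⊆ U ∪ A ∪ Mv := by
    intro i hi
    by_cases h0 : nkCl (s - i) = 0
    · exact Finset.mem_union_left _ (Finset.mem_union_left _ (Finset.mem_filter.2 ⟨hi, h0⟩))
    by_cases h1 : nkCl (s - i) = 1
    · exact Finset.mem_union_left _ (Finset.mem_union_right _ (Finset.mem_filter.2 ⟨hi, h1⟩))
    · exact Finset.mem_union_right _ (Finset.mem_filter.2 ⟨hi, h0, h1⟩)
  have hAcard : A.card ≤ 1 := by
    refine Finset.card_le_one.2 fun i hi j hj => ?_
    have hiI := (Finset.mem_filter.1 hi).1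
    have hjI := (Finset.mem_filter.1 hj).1
    have hic := (Finset.mem_filter.1 hi).2
    have hjc := (Finset.mem_filter.1 hj).2
    have heq := hcon i hiI j hjI
    have hco : nkH d n hd s x i ⟨0, hd⟩ = nkH d n hd s x j ⟨0, hd⟩ := by rw [heq]
    rw [nkH_apply_coord, nkH_apply_coord, hic, hjc] at hco
    have : (i : ℝ) = (j : ℝ) := by push_cast at hco ⊢; linarith
    exact Fin.val_injective (Nat.cast_injective this)
  have hMvcard : Mv.card ≤ 1 := by
    refine Finset.card_le_one.2 fun i hi j hj => ?_
    have hic := (Finset.mem_filter.1 hi).2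
    have hjc := (Finset.mem_filter.1 hj).2
    have hi1 : (i : ℝ) < s :=
      by have := pos_of_nkCl_pos (lt_of_le_of_ne (nkCl_nonneg _) (Ne.symm hic.1)); linarith
    have hi2 : s < (i : ℝ) + 1 :=
      by have := lt_one_of_nkCl_lt_one (lt_of_le_of_ne (nkCl_le_one _) hic.2); linarith
    have hj1 : (j : ℝ) < s :=
      by have := pos_of_nkCl_pos (lt_of_le_of_ne (nkCl_nonneg _) (Ne.symm hjc.1)); linarith
    have hj2 : s < (j : ℝ) + 1 :=
      by have := lt_one_of_nkCl_lt_one (lt_of_le_of_ne (nkCl_le_one _) hjc.2); linarith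
    have h1 : ((i : ℕ) : ℝ) < ((j : ℕ) : ℝ) + 1 := by push_cast; linarith
    have h2 : ((j : ℕ) : ℝ) < ((i : ℕ) : ℝ) + 1 := by push_cast; linarith
    have h1' : (i : ℕ) < (j : ℕ) + 1 := by exact_mod_cast h1
    have h2' : (j : ℕ) < (i : ℕ) + 1 := by exact_mod_cast h2
    exact Fin.val_injective (by omega)
  have hcard : k + 1 ≤ U.card + A.card + Mv.card := by
    calc k + 1 = I.card := hI.symm
      _ ≤ (U ∪ A ∪ Mv).card := Finset.card_le_card hsub
      _ ≤ (U ∪ A).card + Mv.card := Finset.card_union_le _ _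
      _ ≤ U.card + A.card + Mv.card := by
          exact Nat.add_le_add_right (Finset.card_union_le _ _) _
  have hUne : U.Nonempty := Finset.card_pos.1 (by omega)
  obtain ⟨u', hu'U⟩ := hUne
  have hu'I : u' ∈ I := (Finset.mem_filter.1 hu'U).1
  have hu'c : nkCl (s - u') = 0 := (Finset.mem_filter.1 hu'U).2
  have hsu' : s ≤ (u' : ℝ) := by
    by_contra h
    push_neg at h
    exact absurd hu'c (ne_of_gt (nkCl_pos (by linarith)))
  have hu'n : ((u' : ℕ) : ℝ) < (n : ℝ) := by exact_mod_cast u'.isLt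
  have hv : nkCl (s - n) = 0 := nkCl_of_nonpos (by linarith)
  by_cases hAne : A.Nonempty
  · obtain ⟨a, haA⟩ := hAne
    have haI : a ∈ I := (Finset.mem_filter.1 haA).1
    have hac : nkCl (s - a) = 1 := (Finset.mem_filter.1 haA).2
    have heq := hcon a haI u' hu'I
    have hco : nkH d n hd s x a ⟨0, hd⟩ = nkH d n hd s x u' ⟨0, hd⟩ := by rw [heq]
    rw [nkH_apply_coord, nkH_apply_coord, hac, hu'c, hv] at hco
    have hb := nk_coord_le d n hd x u'
    have ha0 : (0 : ℝ) ≤ (a : ℝ) := by positivity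
    have hMle : x u' ⟨0, hd⟩ ≤ M - 1 := by rw [hM]; linarith
    linarith
  · have hA0 : A.card = 0 := by
      rw [Finset.not_nonempty_iff_eq_empty] at hAne; simp [hAne]
    have hUk : k ≤ U.card := by omega
    obtain ⟨J, hJU, hJcard⟩ := Finset.exists_subset_card_eq (s := U) (n := k) hUk
    obtain ⟨i, hiJ, j, hjJ, hne⟩ := hx J hJcard
    apply hne
    have hiU := hJU hiJ
    have hjU := hJU hjJ
    have hiI : i ∈ I := (Finset.mem_filter.1 hiU).1
    have hjI : j ∈ I := (Finset.mem_filter.1 hjU).1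
    have heq := hcon i hiI j hjI
    rwa [nkH_of_cl_zero d n hd s x i (Finset.mem_filter.1 hiU).2,
      nkH_of_cl_zero d n hd s x j (Finset.mem_filter.1 hjU).2] at heq

lemma nkH_zero (d n : ℕ) (hd : 1 ≤ d) (x : Fin n → EuclideanSpace ℝ (Fin d)) :
    nkH d n hd 0 x = x := by
  funext i
  exact nkH_of_cl_zero d n hd 0 x i
    (nkCl_of_nonpos (by rw [zero_sub]; exact neg_nonpos.2 (by positivity)))

lemma nkH_one (d n : ℕ) (hd : 1 ≤ d) (x : Fin n → EuclideanSpace ℝ (Fin d)) (i : Fin n) :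
    nkH d n hd ((n : ℝ) + 1) x i = ((1 : ℝ) + i) • EuclideanSpace.single ⟨0, hd⟩ (1 : ℝ) := by
  have h1 : nkCl ((n : ℝ) + 1 - i) = 1 := by
    apply nkCl_of_one_le
    have : ((i : ℕ) : ℝ) < (n : ℝ) := by exact_mod_cast i.isLt
    linarith
  have h2 : nkCl ((n : ℝ) + 1 - n) = 1 := by
    apply nkCl_of_one_le; simp
  rw [nkH, h1, h2]
  simp

lemma nk_const_mem (d k n : ℕ) (hd : 1 ≤ d) (hk : 2 ≤ k) :
    (fun i : Fin n => ((1 : ℝ) + i) • EuclideanSpace.single ⟨0, hd⟩ (1 : ℝ)) ∈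
      noKEqual d (k + 1) n := by
  intro I hI
  have h2 : 1 < I.card := by omega
  obtain ⟨i, hi, j, hj, hij⟩ := Finset.one_lt_card.1 h2
  refine ⟨i, hi, j, hj, fun h => hij ?_⟩
  have h' : ((1 : ℝ) + (i : ℝ)) • EuclideanSpace.single (⟨0, hd⟩ : Fin d) (1 : ℝ) =
      ((1 : ℝ) + (j : ℝ)) • EuclideanSpace.single (⟨0, hd⟩ : Fin d) (1 : ℝ) := h
  have hco : (((1 : ℝ) + (i : ℝ)) • EuclideanSpace.single (⟨0, hd⟩ : Fin d) (1 : ℝ)) (⟨0, hd⟩ : Fin d) =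
      (((1 : ℝ) + (j : ℝ)) • EuclideanSpace.single (⟨0, hd⟩ : Fin d) (1 : ℝ)) (⟨0, hd⟩ : Fin d) := by
    rw [h']
  simp only [PiLp.smul_apply, EuclideanSpace.single_apply, if_pos rfl, smul_eq_mul,
    if_true, mul_one] at hco
  have : (i : ℝ) = (j : ℝ) := by linarith
  exact Fin.val_injective (Nat.cast_injective this)

lemma nkH_continuous (d n : ℕ) (hd : 1 ≤ d) :
    Continuous (fun p : ℝ × (Fin n → EuclideanSpace ℝ (Fin d)) => nkH d n hd p.1 p.2) := by
  unfold nkH nkCl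
  refine continuous_pi fun i => Continuous.add (Continuous.fun_smul ?_ ?_) (Continuous.fun_smul ?_ continuous_const)
  · exact continuous_const.sub ((continuous_const.max (continuous_const.min (continuous_fst.sub continuous_const))))
  · exact (continuous_apply i).comp continuous_snd
  · have hcl : ∀ c : ℝ, Continuous (fun p : ℝ × (Fin n → EuclideanSpace ℝ (Fin d)) => max 0 (min 1 (p.1 - c))) :=
      fun c => continuous_const.max (continuous_const.min (continuous_fst.sub continuous_const))
    have hsum : Continuous (fun p : ℝ × (Fin n → EuclideanSpace ℝ (Fin d)) => (1 : ℝ) + ∑ j, ‖p.2 j‖) := by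
      refine continuous_const.add (continuous_finset_sum _ fun j _ => ?_)
      exact ((continuous_apply j).comp continuous_snd).norm
    exact (hcl _).mul ((((continuous_const.sub (hcl _)).mul hsum).add (hcl _)).add continuous_const)

/-- The inclusion `M_d^{(k)}(n) ↪ M_d^{(k+1)}(n)` is null-homotopic. -/
theorem inclusion_noKEqual_succ_nullhomotopic (d k n : ℕ) (hd : 1 ≤ d) (hk : 2 ≤ k) :
    (ContinuousMap.mk (Set.inclusion (noKEqual_subset_succ d k n))
      (continuous_inclusion _)).Nullhomotopic := by
  classical
  refine ⟨⟨fun i => ((1 : ℝ) + i) • EuclideanSpace.single ⟨0, hd⟩ (1 : ℝ),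
    nk_const_mem d k n hd hk⟩, ⟨?_⟩⟩
  refine ⟨⟨fun p => ⟨nkH d n hd (((n : ℝ) + 1) * p.1) p.2.1,
    nkH_mem d k n hd hk _ _ p.2.2⟩, ?_⟩, ?_, ?_⟩
  · apply Continuous.subtype_mk
    exact (nkH_continuous d n hd).comp
      ((continuous_const.mul (continuous_subtype_val.comp continuous_fst)).prodMk
        (continuous_subtype_val.comp continuous_snd))
  · intro x
    apply Subtype.ext
    show nkH d n hd (((n : ℝ) + 1) * ((0 : unitInterval) : ℝ)) x.1 = x.1
    simp only [Set.Icc.coe_zero, mul_zero]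
    exact nkH_zero d n hd x.1
  · intro x
    apply Subtype.ext
    show nkH d n hd (((n : ℝ) + 1) * ((1 : unitInterval) : ℝ)) x.1 =
      fun i : Fin n => ((1 : ℝ) + i) • EuclideanSpace.single ⟨0, hd⟩ (1 : ℝ)
    simp only [Set.Icc.coe_one, mul_one]
    funext i
    exact nkH_one d n hd x.1 i
end

section
/- For all integers d ≥ 1, k ≥ 3, n ≥ 0, the inclusion map M_d^{(2)}(n) ↪ M_d^{(k)}(n) of the configuration space of n distinct points in ℝ^d into the no-k-equal space is null-homotopic. -/
/-- The no-2-equal condition (pairwise distinct points) implies the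
no-`k`-equal condition for `k ≥ 2`. -/
lemma noKEqual_two_subset (d k n : ℕ) (hk : 2 ≤ k) :
    noKEqual d 2 n ⊆ noKEqual d k n := by
  intro x hx I hI
  obtain ⟨t, hts, htc⟩ := I.exists_subset_card_eq (show 2 ≤ I.card by omega)
  obtain ⟨i, hi, j, hj, hij⟩ := hx t htc
  exact ⟨i, hts hi, j, hts hj, hij⟩

section NKaux

variable {d n k : ℕ}

/-- A big continuous "radius" function dominating all pairwise distances. -/
noncomputable def nkR (x : Fin n → EuclideanSpace ℝ (Fin d)) : ℝ :=
  1 + ∑ i, ∑ j, ‖x i - x j‖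

lemma nkR_pos (x : Fin n → EuclideanSpace ℝ (Fin d)) : 0 < nkR x := by
  have : (0:ℝ) ≤ ∑ i, ∑ j, ‖x i - x j‖ :=
    Finset.sum_nonneg fun i _ => Finset.sum_nonneg fun j _ => norm_nonneg _
  unfold nkR; linarith

lemma norm_lt_nkR (x : Fin n → EuclideanSpace ℝ (Fin d)) (i j : Fin n) :
    ‖x i - x j‖ < nkR x := by
  have h1 : ‖x i - x j‖ ≤ ∑ j', ‖x i - x j'‖ :=
    Finset.single_le_sum (f := fun j' => ‖x i - x j'‖) (fun _ _ => norm_nonneg _)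
      (Finset.mem_univ j)
  have h2 : (∑ j', ‖x i - x j'‖) ≤ ∑ i', ∑ j', ‖x i' - x j'‖ :=
    Finset.single_le_sum (f := fun i' => ∑ j', ‖x i' - x j'‖)
      (fun _ _ => Finset.sum_nonneg fun _ _ => norm_nonneg _) (Finset.mem_univ i)
  unfold nkR; linarith

lemma nkR_continuous : Continuous (nkR (d := d) (n := n)) := by
  unfold nkR; fun_prop

/-- The basic direction vector. -/
noncomputable def nkV (hd : 1 ≤ d) : EuclideanSpace ℝ (Fin d) :=
  EuclideanSpace.single ⟨0, hd⟩ 1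

lemma abs_coord_le (x : EuclideanSpace ℝ (Fin d)) (z : Fin d) : |x z| ≤ ‖x‖ := by
  rw [EuclideanSpace.norm_eq]
  apply Real.abs_le_sqrt
  have := Finset.single_le_sum (f := fun i => ‖x i‖ ^ 2) (fun i _ => sq_nonneg _)
    (Finset.mem_univ z)
  simpa [Real.norm_eq_abs, sq_abs] using this

lemma pairwise_of_mem_two {x : Fin n → EuclideanSpace ℝ (Fin d)}
    (hx : x ∈ noKEqual d 2 n) {i j : Fin n} (hij : i ≠ j) : x i ≠ x j := by
  obtain ⟨a, ha, b, hb, hab⟩ := hx {i, j} (Finset.card_pair hij)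
  simp only [Finset.mem_insert, Finset.mem_singleton] at ha hb
  rcases ha with rfl | rfl <;> rcases hb with rfl | rfl <;>
    first
      | exact hab
      | exact fun h => hab h.symm
      | exact absurd rfl hab

/-- If at most one index is "bad" and the good points are pairwise distinct,
then the tuple lies in the no-`k`-equal space for `k ≥ 3`. -/
lemma mem_noKEqual_of_almost (hk : 3 ≤ k) (y : Fin n → EuclideanSpace ℝ (Fin d))
    (G : Fin n → Prop)
    (hbad : ∀ i j, ¬ G i → ¬ G j → i = j)
    (hgood : ∀ i j, i ≠ j → G i → G j → y i ≠ y j) :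
    y ∈ noKEqual d k n := by
  intro I hI
  classical
  have hsplit := Finset.card_filter_add_card_filter_not (s := I) (p := G)
  have hb1 : (I.filter (fun i => ¬ G i)).card ≤ 1 := by
    apply Finset.card_le_one.2
    intro a ha b hb
    simp only [Finset.mem_filter] at ha hb
    exact hbad a b ha.2 hb.2
  have h2 : 1 < (I.filter G).card := by omega
  obtain ⟨a, ha, b, hb, hab⟩ := Finset.one_lt_card.1 h2
  simp only [Finset.mem_filter] at ha hb
  exact ⟨a, ha.1, b, hb.1, hgood a b hab ha.2 hb.2⟩

/-- The key separation lemma: points sheared by sufficiently different multiples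
of `nkV` along the first coordinate are distinct. -/
lemma nk_sep (hd : 1 ≤ d) {x y : EuclideanSpace ℝ (Fin d)} (a ρ ci cj : ℝ)
    (ha : 0 ≤ a) (habs : a * ‖x - y‖ < ρ) (hc : 2 ≤ |ci - cj|) :
    a • x + (ci * ρ) • nkV hd ≠ a • y + (cj * ρ) • nkV hd := by
  intro h
  set z0 : Fin d := ⟨0, hd⟩ with hz0
  have hρ : 0 < ρ := lt_of_le_of_lt (mul_nonneg ha (norm_nonneg _)) habs
  have hz : (a • x + (ci * ρ) • nkV hd) z0 = (a • y + (cj * ρ) • nkV hd) z0 := by rw [h]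
  have hv : nkV hd z0 = 1 := by
    simp [nkV, EuclideanSpace.single_apply, hz0]
  simp only [PiLp.add_apply, PiLp.smul_apply, smul_eq_mul, hv, mul_one] at hz
  have hcoord : |x z0 - y z0| ≤ ‖x - y‖ := by
    have := abs_coord_le (x - y) z0
    simpa [PiLp.sub_apply] using this
  have h1 : |a * (x z0 - y z0)| ≤ a * ‖x - y‖ := by
    rw [abs_mul, abs_of_nonneg ha]
    exact mul_le_mul_of_nonneg_left hcoord ha
  have h2 : (ci - cj) * ρ = a * (y z0 - x z0) := by ring_nf; nlinarith [hz]
  have h3 : |(ci - cj) * ρ| = |ci - cj| * ρ := by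
    rw [abs_mul, abs_of_pos hρ]
  have h4 : |a * (y z0 - x z0)| = |a * (x z0 - y z0)| := by
    rw [abs_mul, abs_mul, abs_sub_comm]
  have h5 : |ci - cj| * ρ ≤ a * ‖x - y‖ := by rw [← h3, h2, h4]; exact h1
  have h6 : 2 * ρ ≤ |ci - cj| * ρ := mul_le_mul_of_nonneg_right hc (le_of_lt hρ)
  linarith

/-- The shift coefficients. -/
noncomputable def nkC (i : Fin n) : ℝ := 2 * (i : ℝ) + 4

lemma nkC_ge (i : Fin n) : 4 ≤ nkC i := by
  have : (0:ℝ) ≤ (i : ℝ) := Nat.cast_nonneg _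
  unfold nkC; linarith

lemma nkC_sub {i j : Fin n} (hij : i ≠ j) : 2 ≤ |nkC i - nkC j| := by
  have hne : ((i : ℕ) : ℤ) ≠ ((j : ℕ) : ℤ) := by
    simpa using fun hc => hij (Fin.ext (by exact_mod_cast hc))
  have h1 : (1:ℤ) ≤ |((i:ℕ):ℤ) - ((j:ℕ):ℤ)| := Int.one_le_abs (sub_ne_zero.2 hne)
  have h2 : (1:ℝ) ≤ |((i:ℕ):ℝ) - ((j:ℕ):ℝ)| := by
    calc (1:ℝ) ≤ ((|((i:ℕ):ℤ) - ((j:ℕ):ℤ)| : ℤ) : ℝ) := by exact_mod_cast h1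
    _ = |((i:ℕ):ℝ) - ((j:ℕ):ℝ)| := by push_cast; ring
  have : nkC i - nkC j = 2 * (((i:ℕ):ℝ) - ((j:ℕ):ℝ)) := by unfold nkC; ring
  rw [this, abs_mul, abs_of_nonneg (by norm_num : (0:ℝ) ≤ 2)]
  linarith

/-- The clamp function. -/
noncomputable def nkPhi (s : ℝ) : ℝ := max 0 (min s 1)

lemma nkPhi_of_nonpos {s : ℝ} (h : s ≤ 0) : nkPhi s = 0 :=
  max_eq_left (le_trans (min_le_left s 1) h)

lemma nkPhi_of_one_le {s : ℝ} (h : 1 ≤ s) : nkPhi s = 1 := by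
  rw [nkPhi, min_eq_right h]
  exact max_eq_right zero_le_one

lemma nkPhi_continuous : Continuous nkPhi := by
  unfold nkPhi; fun_prop

lemma nkPhi_mid {s : ℝ} (h : ¬ (nkPhi s = 0 ∨ nkPhi s = 1)) : 0 < s ∧ s < 1 := by
  push_neg at h
  constructor
  · by_contra hs
    exact h.1 (nkPhi_of_nonpos (by linarith [not_lt.1 hs]))
  · by_contra hs
    exact h.2 (nkPhi_of_one_le (by linarith [not_lt.1 hs]))

/-- Stage 1 positions: each point is shifted, in staggered time windows, by a huge
multiple of `nkV`. -/
noncomputable def nkY1 (hd : 1 ≤ d) (t : ℝ) (x : Fin n → EuclideanSpace ℝ (Fin d)) :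
    Fin n → EuclideanSpace ℝ (Fin d) :=
  fun i => x i + ((nkC i * nkPhi ((n : ℝ) * t - ((i : ℕ) : ℝ))) * nkR x) • nkV hd

lemma nkY1_mem (hd : 1 ≤ d) (hk : 3 ≤ k) {x : Fin n → EuclideanSpace ℝ (Fin d)}
    (hx : x ∈ noKEqual d 2 n) (t : ℝ) : nkY1 hd t x ∈ noKEqual d k n := by
  apply mem_noKEqual_of_almost hk _
    (fun i => nkPhi ((n : ℝ) * t - ((i : ℕ) : ℝ)) = 0 ∨
      nkPhi ((n : ℝ) * t - ((i : ℕ) : ℝ)) = 1)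
  · intro i j hi hj
    obtain ⟨h1, h2⟩ := nkPhi_mid hi
    obtain ⟨h3, h4⟩ := nkPhi_mid hj
    have hij1 : (i : ℕ) < (j : ℕ) + 1 := by
      have : ((i:ℕ):ℝ) < ((j:ℕ):ℝ) + 1 := by linarith
      exact_mod_cast this
    have hij2 : (j : ℕ) < (i : ℕ) + 1 := by
      have : ((j:ℕ):ℝ) < ((i:ℕ):ℝ) + 1 := by linarith
      exact_mod_cast this
    exact Fin.ext (by omega)
  · intro i j hij hGi hGj
    have hxij := pairwise_of_mem_two hx hij
    have hnorm : (1:ℝ) * ‖x i - x j‖ < nkR x := by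
      rw [one_mul]; exact norm_lt_nkR x i j
    rcases hGi with h0 | h1 <;> rcases hGj with h0' | h1'
    · simpa [nkY1, h0, h0'] using hxij
    · have hc : 2 ≤ |nkC i * nkPhi ((n : ℝ) * t - ((i : ℕ) : ℝ)) -
          nkC j * nkPhi ((n : ℝ) * t - ((j : ℕ) : ℝ))| := by
        rw [h0, h1', mul_zero, mul_one, zero_sub, abs_neg,
          abs_of_nonneg (by linarith [nkC_ge j])]
        linarith [nkC_ge j]
      have := nk_sep hd (x := x i) (y := x j) 1 (nkR x) _ _ zero_le_one hnorm hc
      simpa [nkY1, one_smul] using this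
    · have hc : 2 ≤ |nkC i * nkPhi ((n : ℝ) * t - ((i : ℕ) : ℝ)) -
          nkC j * nkPhi ((n : ℝ) * t - ((j : ℕ) : ℝ))| := by
        rw [h1, h0', mul_zero, mul_one, sub_zero,
          abs_of_nonneg (by linarith [nkC_ge i])]
        linarith [nkC_ge i]
      have := nk_sep hd (x := x i) (y := x j) 1 (nkR x) _ _ zero_le_one hnorm hc
      simpa [nkY1, one_smul] using this
    · have hc : 2 ≤ |nkC i * nkPhi ((n : ℝ) * t - ((i : ℕ) : ℝ)) -
          nkC j * nkPhi ((n : ℝ) * t - ((j : ℕ) : ℝ))| := by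
        rw [h1, h1', mul_one, mul_one]
        exact nkC_sub hij
      have := nk_sep hd (x := x i) (y := x j) 1 (nkR x) _ _ zero_le_one hnorm hc
      simpa [nkY1, one_smul] using this

/-- Stage 2 positions: linear contraction onto the fixed configuration
`i ↦ nkC i • nkV hd`. -/
noncomputable def nkY2 (hd : 1 ≤ d) (t : ℝ) (x : Fin n → EuclideanSpace ℝ (Fin d)) :
    Fin n → EuclideanSpace ℝ (Fin d) :=
  fun i => (1 - t) • x i + (nkC i * ((1 - t) * nkR x + t)) • nkV hd

lemma nkY2_mem (hd : 1 ≤ d) (hk : 3 ≤ k) {x : Fin n → EuclideanSpace ℝ (Fin d)}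
    (hx : x ∈ noKEqual d 2 n) {t : ℝ} (ht0 : 0 ≤ t) (ht1 : t ≤ 1) :
    nkY2 hd t x ∈ noKEqual d k n := by
  apply mem_noKEqual_of_almost hk _ (fun _ => True)
  · intro i j hi _; exact absurd trivial hi
  · intro i j hij _ _
    have habs : (1 - t) * ‖x i - x j‖ < (1 - t) * nkR x + t := by
      rcases eq_or_lt_of_le ht0 with h | h
      · rw [← h]; simpa using norm_lt_nkR x i j
      · have h1 : (1 - t) * ‖x i - x j‖ ≤ (1 - t) * nkR x :=
          mul_le_mul_of_nonneg_left (le_of_lt (norm_lt_nkR x i j)) (by linarith)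
        linarith
    have := nk_sep hd (x := x i) (y := x j) (1 - t) ((1 - t) * nkR x + t)
      (nkC i) (nkC j) (by linarith) habs (nkC_sub hij)
    simpa [nkY2] using this

lemma nkY0_mem (hd : 1 ≤ d) (hk : 3 ≤ k) :
    (fun i : Fin n => nkC i • nkV hd) ∈ noKEqual d k n := by
  apply mem_noKEqual_of_almost hk _ (fun _ => True)
  · intro i j hi _; exact absurd trivial hi
  · intro i j hij _ _
    have := nk_sep hd (x := (0 : EuclideanSpace ℝ (Fin d))) (y := 0) 0 1
      (nkC i) (nkC j) le_rfl (by simp) (nkC_sub hij)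
    simpa using this

end NKaux


/-- The inclusion of the configuration space `M_d^{(2)}(n)` of `n` distinct points
into the no-`k`-equal space `M_d^{(k)}(n)` is null-homotopic for `k ≥ 3`. -/
theorem inclusion_config_noKEqual_nullhomotopic (d k n : ℕ) (hd : 1 ≤ d) (hk : 3 ≤ k) :
    (ContinuousMap.mk (Set.inclusion (noKEqual_two_subset d k n (by omega)))
      (continuous_inclusion _)).Nullhomotopic := by
  classical
  let X := ↥(noKEqual d 2 n)
  let Y := ↥(noKEqual d k n)
  let f : C(X, Y) := ContinuousMap.mk (Set.inclusion (noKEqual_two_subset d k n (by omega)))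
    (continuous_inclusion _)
  have hx2 : Continuous fun p : ↥unitInterval × X =>
      (p.2 : Fin n → EuclideanSpace ℝ (Fin d)) := continuous_subtype_val.comp continuous_snd
  have ht : Continuous fun p : ↥unitInterval × X => (p.1 : ℝ) :=
    continuous_subtype_val.comp continuous_fst
  have hR : Continuous fun p : ↥unitInterval × X =>
      nkR (p.2 : Fin n → EuclideanSpace ℝ (Fin d)) := nkR_continuous.comp hx2
  have hcont2 : Continuous fun p : ↥unitInterval × X =>
      nkY2 hd (p.1 : ℝ) (p.2 : Fin n → EuclideanSpace ℝ (Fin d)) := by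
    unfold nkY2
    apply continuous_pi
    intro i
    exact ((continuous_const.sub ht).smul ((continuous_apply i).comp hx2)).add
      ((continuous_const.mul (((continuous_const.sub ht).mul hR).add ht)).smul continuous_const)
  have hcont1 : Continuous fun p : ↥unitInterval × X =>
      nkY1 hd (p.1 : ℝ) (p.2 : Fin n → EuclideanSpace ℝ (Fin d)) := by
    unfold nkY1
    apply continuous_pi
    intro i
    exact ((continuous_apply i).comp hx2).add
      (((continuous_const.mul (nkPhi_continuous.comp
        ((continuous_const.mul ht).sub continuous_const))).mul hR).smul continuous_const)
  let g1 : C(X, Y) :=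
    { toFun := fun x => ⟨nkY2 hd 0 (x : Fin n → EuclideanSpace ℝ (Fin d)),
        nkY2_mem hd hk x.2 le_rfl zero_le_one⟩
      continuous_toFun := by
        apply Continuous.subtype_mk
        exact (hcont2.comp (Continuous.prodMk
          (continuous_const (y := (⟨(0:ℝ), le_rfl, zero_le_one⟩ : ↥unitInterval)))
          continuous_id))
      }
  let y0 : Y := ⟨fun i => nkC i • nkV hd, nkY0_mem hd hk⟩
  let H1 : f.Homotopy g1 :=
    { toFun := fun p => ⟨nkY1 hd (p.1 : ℝ) (p.2 : Fin n → EuclideanSpace ℝ (Fin d)),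
        nkY1_mem hd hk p.2.2 _⟩
      continuous_toFun := hcont1.subtype_mk _
      map_zero_left := by
        intro x
        apply Subtype.ext
        funext i
        show nkY1 hd ((0 : ↥unitInterval) : ℝ) (x : Fin n → EuclideanSpace ℝ (Fin d)) i
          = (x : Fin n → EuclideanSpace ℝ (Fin d)) i
        have h0 : ((0 : ↥unitInterval) : ℝ) = 0 := rfl
        rw [nkY1, h0, nkPhi_of_nonpos (by
          have : (0:ℝ) ≤ ((i:ℕ):ℝ) := Nat.cast_nonneg _
          linarith)]
        simp
      map_one_left := by
        intro x
        apply Subtype.ext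
        funext i
        show nkY1 hd ((1 : ↥unitInterval) : ℝ) (x : Fin n → EuclideanSpace ℝ (Fin d)) i
          = nkY2 hd 0 (x : Fin n → EuclideanSpace ℝ (Fin d)) i
        have h1 : ((1 : ↥unitInterval) : ℝ) = 1 := rfl
        have hphi : nkPhi ((n : ℝ) * 1 - ((i:ℕ):ℝ)) = 1 := by
          apply nkPhi_of_one_le
          have : (i : ℕ) + 1 ≤ n := i.isLt
          have : ((i:ℕ):ℝ) + 1 ≤ (n:ℝ) := by exact_mod_cast this
          linarith
        rw [nkY1, nkY2, h1, hphi]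
        simp }
  let H2 : g1.Homotopy (ContinuousMap.const X y0) :=
    { toFun := fun p => ⟨nkY2 hd (p.1 : ℝ) (p.2 : Fin n → EuclideanSpace ℝ (Fin d)),
        nkY2_mem hd hk p.2.2 p.1.2.1 p.1.2.2⟩
      continuous_toFun := hcont2.subtype_mk _
      map_zero_left := by
        intro x
        apply Subtype.ext
        rfl
      map_one_left := by
        intro x
        apply Subtype.ext
        funext i
        show nkY2 hd ((1 : ↥unitInterval) : ℝ) (x : Fin n → EuclideanSpace ℝ (Fin d)) i
          = nkC i • nkV hd
        have h1 : ((1 : ↥unitInterval) : ℝ) = 1 := rfl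
        rw [nkY2, h1]
        simp }
  exact ⟨y0, ⟨H1.trans H2⟩⟩
end

section
/- For all integers d ≥ 1, k ≥ 2, n ≥ 0, let B_d^{(k)}(n) be the subspace of (ℝ^d × ℝ)^n consisting of tuples ((c_1, r_1), …, (c_n, r_n)) with r_i > 0 and ‖c_i‖ + r_i ≤ 1 for all i (so each open ball B(c_i, r_i) lies in the unit ball of ℝ^d), and such that for every k-element subset I of {1, …, n} the intersection ⋂_{i ∈ I} B(c_i, r_i) of the corresponding open balls is empty. Then the continuous map B_d^{(k)}(n) → M_d^{(k)}(n) sending a configuration of balls to the tuple of its centers (c_1, …, c_n) is well defined and is a homotopy equivalence. -/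
/-- The space `B_d^{(k)}(n)` of configurations of `n` open balls `B(cᵢ, rᵢ)` inside the
unit ball of `ℝ^d` (`rᵢ > 0`, `‖cᵢ‖ + rᵢ ≤ 1`) such that no `k` of the balls have a
common point. -/
def ballConfig (d k n : ℕ) : Set (Fin n → EuclideanSpace ℝ (Fin d) × ℝ) :=
  {b | (∀ i, 0 < (b i).2 ∧ ‖(b i).1‖ + (b i).2 ≤ 1) ∧
       ∀ I : Finset (Fin n), I.card = k →
         (⋂ i ∈ I, Metric.ball (b i).1 (b i).2) = ∅}

/-- The centers map is well defined: the centers of a non-`k`-overlapping configuration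
of balls form a non-`k`-equal configuration of points. -/
lemma centers_mem_noKEqual (d k n : ℕ) (b : Fin n → EuclideanSpace ℝ (Fin d) × ℝ)
    (hb : b ∈ ballConfig d k n) : (fun i => (b i).1) ∈ noKEqual d k n := by
  intro I hI
  by_contra h
  push_neg at h
  have hne : I.Nonempty := by
    by_contra hne
    rw [Finset.not_nonempty_iff_eq_empty] at hne
    have h0 : (⋂ i ∈ I, Metric.ball (b i).1 (b i).2) = ∅ := hb.2 I hI
    rw [hne] at h0
    simp at h0
  obtain ⟨i0, hi0⟩ := hne
  have hmem : (b i0).1 ∈ ⋂ i ∈ I, Metric.ball (b i).1 (b i).2 := by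
    simp only [Set.mem_iInter]
    intro i hi
    rw [Metric.mem_ball, show (b i).1 = (b i0).1 from h i hi i0 hi0, dist_self]
    exact (hb.1 i).1
  rw [hb.2 I hI] at hmem
  exact hmem

/-- The continuous map `B_d^{(k)}(n) → M_d^{(k)}(n)` sending a configuration of balls to
the tuple of its centers. -/
noncomputable def centersMap (d k n : ℕ) : C(↥(ballConfig d k n), ↥(noKEqual d k n)) :=
  ContinuousMap.mk
    (fun b => ⟨fun i => ((b : Fin n → EuclideanSpace ℝ (Fin d) × ℝ) i).1,
      centers_mem_noKEqual d k n b b.2⟩)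
    (by
      apply Continuous.subtype_mk
      exact continuous_pi fun i =>
        (continuous_fst.comp ((continuous_apply i).comp continuous_subtype_val)))

namespace NoKAux

open Finset Metric

variable {d k n : ℕ}

/-! ### Fold lemmas -/

lemma continuous_fold_max {X α : Type*} [TopologicalSpace X] (s : Finset α) (b : ℝ)
    (f : α → X → ℝ) (hf : ∀ a, Continuous (f a)) :
    Continuous fun x => s.fold max b (fun a => f a x) := by
  classical
  induction s using Finset.induction_on with
  | empty => simpa using continuous_const
  | @insert _ _ ha ih =>
      simp only [Finset.fold_insert ha]
      exact (hf _).max ih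

lemma continuous_fold_min {X α : Type*} [TopologicalSpace X] (s : Finset α) (b : ℝ)
    (f : α → X → ℝ) (hf : ∀ a, Continuous (f a)) :
    Continuous fun x => s.fold min b (fun a => f a x) := by
  classical
  induction s using Finset.induction_on with
  | empty => simpa using continuous_const
  | @insert _ _ ha ih =>
      simp only [Finset.fold_insert ha]
      exact (hf _).min ih

lemma fold_max_attained {α : Type*} [DecidableEq α] (s : Finset α) (f : α → ℝ)
    (h : 0 < s.fold max 0 f) : ∃ a ∈ s, s.fold max 0 f ≤ f a := by
  classical
  induction s using Finset.induction_on with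
  | empty => simp at h
  | @insert a s ha ih =>
      rw [Finset.fold_insert ha] at h ⊢
      rcases le_total (s.fold max 0 f) (f a) with hle | hle
      · exact ⟨a, Finset.mem_insert_self a s, by rw [max_eq_left hle]⟩
      · rw [max_eq_right hle] at h ⊢
        obtain ⟨b, hb, hb2⟩ := ih h
        exact ⟨b, Finset.mem_insert_of_mem hb, hb2⟩

/-! ### The basic quantities -/

noncomputable def maxNorm (d n : ℕ) (x : Fin n → EuclideanSpace ℝ (Fin d)) : ℝ :=
  Finset.univ.fold max 0 (fun i => ‖x i‖)

noncomputable def sc (d n : ℕ) (x : Fin n → EuclideanSpace ℝ (Fin d)) : ℝ :=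
  1 / (2 * (1 + maxNorm d n x))

noncomputable def diam (d n : ℕ) (x : Fin n → EuclideanSpace ℝ (Fin d))
    (I : Finset (Fin n)) : ℝ :=
  (I ×ˢ I).fold max 0 (fun p => dist (x p.1) (x p.2))

noncomputable def rad (d k n : ℕ) (x : Fin n → EuclideanSpace ℝ (Fin d)) : ℝ :=
  (Finset.univ.filter (fun I : Finset (Fin n) => I.card = k)).fold min (1 / 2)
    (fun I => sc d n x * diam d n x I / 3)

lemma maxNorm_nonneg (x : Fin n → EuclideanSpace ℝ (Fin d)) : 0 ≤ maxNorm d n x :=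
  (Finset.le_fold_max _).mpr (Or.inl le_rfl)

lemma norm_le_maxNorm (x : Fin n → EuclideanSpace ℝ (Fin d)) (i : Fin n) :
    ‖x i‖ ≤ maxNorm d n x :=
  (Finset.le_fold_max _).mpr (Or.inr ⟨i, Finset.mem_univ i, le_rfl⟩)

lemma sc_pos (x : Fin n → EuclideanSpace ℝ (Fin d)) : 0 < sc d n x := by
  have := maxNorm_nonneg x
  unfold sc; positivity

lemma sc_le_one (x : Fin n → EuclideanSpace ℝ (Fin d)) : sc d n x ≤ 1 := by
  have h := maxNorm_nonneg x
  rw [sc, div_le_one (by positivity)]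
  linarith

lemma sc_mul_norm_le_half (x : Fin n → EuclideanSpace ℝ (Fin d)) (i : Fin n) :
    sc d n x * ‖x i‖ ≤ 1 / 2 := by
  have h0 := maxNorm_nonneg x
  have h1 := norm_le_maxNorm x i
  have h2 : sc d n x * (1 + maxNorm d n x) = 1 / 2 := by
    rw [sc]; field_simp
  calc sc d n x * ‖x i‖ ≤ sc d n x * (1 + maxNorm d n x) := by
        exact mul_le_mul_of_nonneg_left (by linarith) (sc_pos x).le
    _ = 1 / 2 := h2

lemma diam_nonneg (x : Fin n → EuclideanSpace ℝ (Fin d)) (I : Finset (Fin n)) :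
    0 ≤ diam d n x I :=
  (Finset.le_fold_max _).mpr (Or.inl le_rfl)

lemma dist_le_diam (x : Fin n → EuclideanSpace ℝ (Fin d)) {I : Finset (Fin n)}
    {i j : Fin n} (hi : i ∈ I) (hj : j ∈ I) : dist (x i) (x j) ≤ diam d n x I :=
  (Finset.le_fold_max _).mpr (Or.inr ⟨(i, j), Finset.mem_product.mpr ⟨hi, hj⟩, le_rfl⟩)

lemma diam_attained (x : Fin n → EuclideanSpace ℝ (Fin d)) {I : Finset (Fin n)}
    (hI : I.Nonempty) : ∃ i ∈ I, ∃ j ∈ I, diam d n x I ≤ dist (x i) (x j) := by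
  rcases lt_or_ge 0 (diam d n x I) with h | h
  · obtain ⟨p, hp, hle⟩ := fold_max_attained _ _ h
    rw [Finset.mem_product] at hp
    exact ⟨p.1, hp.1, p.2, hp.2, hle⟩
  · obtain ⟨i, hi⟩ := hI
    exact ⟨i, hi, i, hi, by simpa [dist_self] using h⟩

lemma diam_pos {x : Fin n → EuclideanSpace ℝ (Fin d)} (hx : x ∈ noKEqual d k n)
    {I : Finset (Fin n)} (hI : I.card = k) : 0 < diam d n x I := by
  obtain ⟨i, hi, j, hj, hne⟩ := hx I hI
  exact lt_of_lt_of_le (dist_pos.mpr hne) (dist_le_diam x hi hj)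

lemma rad_le_half (x : Fin n → EuclideanSpace ℝ (Fin d)) : rad d k n x ≤ 1 / 2 :=
  (Finset.fold_min_le _).mpr (Or.inl le_rfl)

lemma rad_le (x : Fin n → EuclideanSpace ℝ (Fin d)) {I : Finset (Fin n)}
    (hI : I.card = k) : rad d k n x ≤ sc d n x * diam d n x I / 3 :=
  (Finset.fold_min_le _).mpr
    (Or.inr ⟨I, Finset.mem_filter.mpr ⟨Finset.mem_univ I, hI⟩, le_rfl⟩)

lemma rad_pos {x : Fin n → EuclideanSpace ℝ (Fin d)} (hx : x ∈ noKEqual d k n) :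
    0 < rad d k n x := by
  refine (Finset.lt_fold_min _).mpr ⟨by norm_num, fun I hI => ?_⟩
  rw [Finset.mem_filter] at hI
  have h1 := diam_pos hx hI.2
  have h2 := sc_pos x
  positivity

/-! ### Continuity -/

lemma continuous_maxNorm : Continuous (maxNorm d n) :=
  continuous_fold_max _ _ _ (fun i => (continuous_apply i).norm)

lemma continuous_sc : Continuous (sc d n) := by
  apply continuous_const.div
  · exact continuous_const.mul (continuous_const.add continuous_maxNorm)
  · intro x
    have := maxNorm_nonneg x
    positivity

lemma continuous_diam (I : Finset (Fin n)) : Continuous (fun x => diam d n x I) :=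
  continuous_fold_max _ _ _
    (fun p => Continuous.dist (continuous_apply p.1) (continuous_apply p.2))

lemma continuous_rad : Continuous (rad d k n) :=
  continuous_fold_min _ _ _
    (fun I => (continuous_sc.mul (continuous_diam I)).div_const 3)

/-! ### Geometry -/

lemma iInter_ball_eq_empty {c : Fin n → EuclideanSpace ℝ (Fin d)} {r : Fin n → ℝ}
    {I : Finset (Fin n)}
    (h : ∃ i ∈ I, ∃ j ∈ I, r i + r j ≤ dist (c i) (c j)) :
    (⋂ i ∈ I, Metric.ball (c i) (r i)) = ∅ := by
  obtain ⟨i, hi, j, hj, hle⟩ := h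
  rw [Set.eq_empty_iff_forall_notMem]
  intro p hp
  simp only [Set.mem_iInter] at hp
  have h1 : dist p (c i) < r i := Metric.mem_ball.mp (hp i hi)
  have h2 : dist p (c j) < r j := Metric.mem_ball.mp (hp j hj)
  have h3 := dist_triangle (c i) p (c j)
  rw [dist_comm (c i) p] at h3
  linarith

lemma inter_empty_of {x : Fin n → EuclideanSpace ℝ (Fin d)} (hk : 1 ≤ k)
    (hx : x ∈ noKEqual d k n) {lam : ℝ} (hlam : sc d n x ≤ lam)
    {r : Fin n → ℝ} (hr : ∀ i, r i ≤ rad d k n x) {I : Finset (Fin n)}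
    (hI : I.card = k) :
    (⋂ i ∈ I, Metric.ball (lam • x i) (r i)) = ∅ := by
  have hne : I.Nonempty := Finset.card_pos.mp (by omega)
  obtain ⟨i, hi, j, hj, hd⟩ := diam_attained x hne
  apply iInter_ball_eq_empty ⟨i, hi, j, hj, ?_⟩
  have hscpos := sc_pos x
  have hlp : 0 < lam := lt_of_lt_of_le hscpos hlam
  have hdist : dist (lam • x i) (lam • x j) = lam * dist (x i) (x j) := by
    rw [dist_smul₀, Real.norm_eq_abs, abs_of_pos hlp]
  rw [hdist]
  have hrle := rad_le x hI
  have h1 := hr i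
  have h2 := hr j
  have hdn : (0:ℝ) ≤ dist (x i) (x j) := dist_nonneg
  have hdl : diam d n x I ≤ dist (x i) (x j) := hd
  nlinarith [diam_nonneg x I]

lemma smul_mem_noKEqual {x : Fin n → EuclideanSpace ℝ (Fin d)} (hx : x ∈ noKEqual d k n)
    {a : ℝ} (ha : a ≠ 0) : (fun i => a • x i) ∈ noKEqual d k n := by
  intro I hI
  obtain ⟨i, hi, j, hj, hne⟩ := hx I hI
  exact ⟨i, hi, j, hj, fun h => hne (smul_right_injective _ ha h)⟩

end NoKAux

namespace NoKAux

open Finset Metric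

variable {d k n : ℕ}

lemma gfun_mem (hk : 1 ≤ k) {x : Fin n → EuclideanSpace ℝ (Fin d)}
    (hx : x ∈ noKEqual d k n) :
    (fun i => (sc d n x • x i, rad d k n x)) ∈ ballConfig d k n := by
  constructor
  · intro i
    refine ⟨rad_pos hx, ?_⟩
    have h1 : ‖sc d n x • x i‖ = sc d n x * ‖x i‖ := by
      rw [norm_smul, Real.norm_eq_abs, abs_of_pos (sc_pos x)]
    have h2 := sc_mul_norm_le_half x i
    have h3 := rad_le_half (k := k) x
    simp only [h1]
    linarith
  · intro I hI
    exact inter_empty_of hk hx le_rfl (fun i => le_rfl) hI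

noncomputable def gmap (d k n : ℕ) (hk : 1 ≤ k) :
    C(↥(noKEqual d k n), ↥(ballConfig d k n)) :=
  ContinuousMap.mk
    (fun x => ⟨fun i => (sc d n x.1 • x.1 i, rad d k n x.1), gfun_mem hk x.2⟩)
    (by
      apply Continuous.subtype_mk
      refine continuous_pi fun i => Continuous.prodMk ?_ ?_
      · exact (continuous_sc.comp continuous_subtype_val).smul
          ((continuous_apply i).comp continuous_subtype_val)
      · exact continuous_rad.comp continuous_subtype_val)

lemma a_pos {t : ℝ} (h0 : 0 ≤ t) (h1 : t ≤ 1) (x : Fin n → EuclideanSpace ℝ (Fin d)) :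
    0 < (1 - t) * sc d n x + t := by
  have h := sc_pos x
  rcases h0.eq_or_lt with rfl | ht
  · simpa using h
  · have := mul_nonneg (by linarith : (0:ℝ) ≤ 1 - t) h.le
    linarith

/-- Homotopy from `centersMap ∘ gmap` to the identity on the no-`k`-equal space. -/
noncomputable def H1 (d k n : ℕ) (hk : 1 ≤ k) :
    ContinuousMap.Homotopy ((centersMap d k n).comp (gmap d k n hk))
      (ContinuousMap.id _) where
  toFun := fun p =>
    ⟨fun i => ((1 - (p.1 : ℝ)) * sc d n p.2.1 + (p.1 : ℝ)) • p.2.1 i,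
      smul_mem_noKEqual p.2.2 (ne_of_gt (a_pos p.1.2.1 p.1.2.2 p.2.1))⟩
  continuous_toFun := by
    apply Continuous.subtype_mk
    refine continuous_pi fun i => ?_
    have ht : Continuous fun p : unitInterval × ↥(noKEqual d k n) => (p.1 : ℝ) :=
      continuous_subtype_val.comp continuous_fst
    have hx : Continuous fun p : unitInterval × ↥(noKEqual d k n) =>
        (p.2 : Fin n → EuclideanSpace ℝ (Fin d)) :=
      continuous_subtype_val.comp continuous_snd
    exact (((continuous_const.sub ht).mul (continuous_sc.comp hx)).add ht).smul
      ((continuous_apply i).comp hx)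
  map_zero_left := fun x => by
    apply Subtype.ext
    funext i
    show ((1 - ((0 : unitInterval) : ℝ)) * sc d n x.1 + ((0 : unitInterval) : ℝ)) • x.1 i
      = sc d n x.1 • x.1 i
    norm_num
  map_one_left := fun x => by
    apply Subtype.ext
    funext i
    show ((1 - ((1 : unitInterval) : ℝ)) * sc d n x.1 + ((1 : unitInterval) : ℝ)) • x.1 i
      = x.1 i
    norm_num

lemma memA (hk : 1 ≤ k) {b : Fin n → EuclideanSpace ℝ (Fin d) × ℝ}
    (hb : b ∈ ballConfig d k n) {t : ℝ} (h0 : 0 ≤ t) (h1 : t ≤ 1) :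
    (fun i => ((b i).1,
      (1 - t) * (b i).2 + t * min (b i).2 (rad d k n (fun j => (b j).1))))
      ∈ ballConfig d k n := by
  have hc := centers_mem_noKEqual d k n b hb
  have hrad : 0 < rad d k n (fun j => (b j).1) := rad_pos hc
  have key : ∀ i, 0 < (1 - t) * (b i).2 + t * min (b i).2 (rad d k n (fun j => (b j).1))
      ∧ (1 - t) * (b i).2 + t * min (b i).2 (rad d k n (fun j => (b j).1)) ≤ (b i).2 := by
    intro i
    have hp := (hb.1 i).1
    have hmin : 0 < min (b i).2 (rad d k n (fun j => (b j).1)) := lt_min hp hrad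
    have hle : min (b i).2 (rad d k n (fun j => (b j).1)) ≤ (b i).2 := min_le_left _ _
    constructor
    · nlinarith
    · nlinarith
  constructor
  · intro i
    refine ⟨(key i).1, ?_⟩
    have hn := (hb.1 i).2
    have := (key i).2
    simp only
    linarith
  · intro I hI
    have hsub : (⋂ i ∈ I, ball (b i).1
        ((1 - t) * (b i).2 + t * min (b i).2 (rad d k n (fun j => (b j).1))))
        ⊆ (⋂ i ∈ I, ball (b i).1 (b i).2) :=
      Set.iInter₂_mono fun i _ => Metric.ball_subset_ball (key i).2
    exact Set.subset_empty_iff.mp (hb.2 I hI ▸ hsub)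

lemma memB (hk : 1 ≤ k) {b : Fin n → EuclideanSpace ℝ (Fin d) × ℝ}
    (hb : b ∈ ballConfig d k n) {t : ℝ} (h0 : 0 ≤ t) (h1 : t ≤ 1) :
    (fun i => (((1 - t) + t * sc d n (fun j => (b j).1)) • (b i).1,
      min (b i).2 (rad d k n (fun j => (b j).1)))) ∈ ballConfig d k n := by
  set c : Fin n → EuclideanSpace ℝ (Fin d) := fun j => (b j).1 with hcdef
  have hc : c ∈ noKEqual d k n := centers_mem_noKEqual d k n b hb
  have hrad : 0 < rad d k n c := rad_pos hc
  have hs0 := sc_pos c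
  have hs1 := sc_le_one c
  have hlam0 : 0 < (1 - t) + t * sc d n c := by nlinarith
  have hlam1 : (1 - t) + t * sc d n c ≤ 1 := by nlinarith
  have hlams : sc d n c ≤ (1 - t) + t * sc d n c := by nlinarith
  constructor
  · intro i
    have hp := (hb.1 i).1
    have hn := (hb.1 i).2
    refine ⟨lt_min hp hrad, ?_⟩
    have h1' : ‖((1 - t) + t * sc d n c) • (b i).1‖
        = ((1 - t) + t * sc d n c) * ‖(b i).1‖ := by
      rw [norm_smul, Real.norm_eq_abs, abs_of_pos hlam0]
    have h2' : ((1 - t) + t * sc d n c) * ‖(b i).1‖ ≤ ‖(b i).1‖ := by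
      nlinarith [norm_nonneg (b i).1]
    have h3' : min (b i).2 (rad d k n c) ≤ (b i).2 := min_le_left _ _
    simp only [h1']
    linarith
  · intro I hI
    exact inter_empty_of hk hc hlams (fun i => min_le_right _ _) hI

lemma memC (hk : 1 ≤ k) {b : Fin n → EuclideanSpace ℝ (Fin d) × ℝ}
    (hb : b ∈ ballConfig d k n) {t : ℝ} (h0 : 0 ≤ t) (h1 : t ≤ 1) :
    (fun i => (sc d n (fun j => (b j).1) • (b i).1,
      (1 - t) * min (b i).2 (rad d k n (fun j => (b j).1))
        + t * rad d k n (fun j => (b j).1))) ∈ ballConfig d k n := by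
  set c : Fin n → EuclideanSpace ℝ (Fin d) := fun j => (b j).1 with hcdef
  have hc : c ∈ noKEqual d k n := centers_mem_noKEqual d k n b hb
  have hrad : 0 < rad d k n c := rad_pos hc
  have hrh := rad_le_half (k := k) c
  have key : ∀ i, 0 < (1 - t) * min (b i).2 (rad d k n c) + t * rad d k n c
      ∧ (1 - t) * min (b i).2 (rad d k n c) + t * rad d k n c ≤ rad d k n c := by
    intro i
    have hp := (hb.1 i).1
    have hmin : 0 < min (b i).2 (rad d k n c) := lt_min hp hrad
    have hle : min (b i).2 (rad d k n c) ≤ rad d k n c := min_le_right _ _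
    exact ⟨by nlinarith, by nlinarith⟩
  constructor
  · intro i
    refine ⟨(key i).1, ?_⟩
    have h1' : ‖sc d n c • (b i).1‖ = sc d n c * ‖(b i).1‖ := by
      rw [norm_smul, Real.norm_eq_abs, abs_of_pos (sc_pos c)]
    have h2' : sc d n c * ‖(b i).1‖ ≤ 1 / 2 := sc_mul_norm_le_half c i
    have := (key i).2
    simp only [h1']
    linarith
  · intro I hI
    exact inter_empty_of hk hc le_rfl (fun i => (key i).2) hI

end NoKAux

namespace NoKAux

open Finset Metric

variable {d k n : ℕ}

section Maps

/-- Continuity helpers for maps out of `ballConfig`. -/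
lemma cont_b : Continuous fun p : unitInterval × ↥(ballConfig d k n) =>
    (p.2 : Fin n → EuclideanSpace ℝ (Fin d) × ℝ) :=
  continuous_subtype_val.comp continuous_snd

lemma cont_t : Continuous fun p : unitInterval × ↥(ballConfig d k n) => (p.1 : ℝ) :=
  continuous_subtype_val.comp continuous_fst

lemma cont_cent : Continuous fun p : unitInterval × ↥(ballConfig d k n) =>
    (fun j => ((p.2 : Fin n → EuclideanSpace ℝ (Fin d) × ℝ) j).1) :=
  continuous_pi fun j => ((continuous_apply j).comp cont_b).fst

/-- The intermediate map `f1`: shrink the radii to `min rᵢ (rad c)`. -/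
noncomputable def f1 (d k n : ℕ) (hk : 1 ≤ k) :
    C(↥(ballConfig d k n), ↥(ballConfig d k n)) :=
  ContinuousMap.mk
    (fun b => ⟨fun i => ((b.1 i).1, min (b.1 i).2 (rad d k n (fun j => (b.1 j).1))),
      by simpa using memA (t := 1) hk b.2 zero_le_one le_rfl⟩)
    (by
      apply Continuous.subtype_mk
      have hb : Continuous fun b : ↥(ballConfig d k n) =>
          (b : Fin n → EuclideanSpace ℝ (Fin d) × ℝ) := continuous_subtype_val
      have hcent : Continuous fun b : ↥(ballConfig d k n) =>
          (fun j => ((b : Fin n → EuclideanSpace ℝ (Fin d) × ℝ) j).1) :=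
        continuous_pi fun j => ((continuous_apply j).comp hb).fst
      refine continuous_pi fun i => Continuous.prodMk ?_ ?_
      · exact ((continuous_apply i).comp hb).fst
      · exact (((continuous_apply i).comp hb).snd).min (continuous_rad.comp hcent))

/-- The intermediate map `f2`: additionally scale the centers by `sc c`. -/
noncomputable def f2 (d k n : ℕ) (hk : 1 ≤ k) :
    C(↥(ballConfig d k n), ↥(ballConfig d k n)) :=
  ContinuousMap.mk
    (fun b => ⟨fun i => (sc d n (fun j => (b.1 j).1) • (b.1 i).1,
        min (b.1 i).2 (rad d k n (fun j => (b.1 j).1))),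
      by simpa using memB (t := 1) hk b.2 zero_le_one le_rfl⟩)
    (by
      apply Continuous.subtype_mk
      have hb : Continuous fun b : ↥(ballConfig d k n) =>
          (b : Fin n → EuclideanSpace ℝ (Fin d) × ℝ) := continuous_subtype_val
      have hcent : Continuous fun b : ↥(ballConfig d k n) =>
          (fun j => ((b : Fin n → EuclideanSpace ℝ (Fin d) × ℝ) j).1) :=
        continuous_pi fun j => ((continuous_apply j).comp hb).fst
      refine continuous_pi fun i => Continuous.prodMk ?_ ?_
      · exact (continuous_sc.comp hcent).smul ((continuous_apply i).comp hb).fst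
      · exact (((continuous_apply i).comp hb).snd).min (continuous_rad.comp hcent))

end Maps

/-- Stage A: shrink the radii. -/
noncomputable def HA (d k n : ℕ) (hk : 1 ≤ k) :
    ContinuousMap.Homotopy (ContinuousMap.id ↥(ballConfig d k n)) (f1 d k n hk) where
  toFun := fun p =>
    ⟨fun i => ((p.2.1 i).1,
      (1 - (p.1 : ℝ)) * (p.2.1 i).2
        + (p.1 : ℝ) * min (p.2.1 i).2 (rad d k n (fun j => (p.2.1 j).1))),
      memA hk p.2.2 p.1.2.1 p.1.2.2⟩
  continuous_toFun := by
    apply Continuous.subtype_mk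
    refine continuous_pi fun i => Continuous.prodMk ?_ ?_
    · exact ((continuous_apply i).comp cont_b).fst
    · exact ((continuous_const.sub cont_t).mul ((continuous_apply i).comp cont_b).snd).add
        (cont_t.mul ((((continuous_apply i).comp cont_b).snd).min
          (continuous_rad.comp cont_cent)))
  map_zero_left := fun b => by
    apply Subtype.ext
    funext i
    show ((b.1 i).1, (1 - ((0 : unitInterval) : ℝ)) * (b.1 i).2
      + ((0 : unitInterval) : ℝ) * _) = b.1 i
    norm_num
  map_one_left := fun b => by
    apply Subtype.ext
    funext i
    show ((b.1 i).1, (1 - ((1 : unitInterval) : ℝ)) * (b.1 i).2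
        + ((1 : unitInterval) : ℝ) * min (b.1 i).2 (rad d k n (fun j => (b.1 j).1)))
      = ((f1 d k n hk b).1 i)
    simp [f1]

/-- Stage B: scale the centers. -/
noncomputable def HB (d k n : ℕ) (hk : 1 ≤ k) :
    ContinuousMap.Homotopy (f1 d k n hk) (f2 d k n hk) where
  toFun := fun p =>
    ⟨fun i => (((1 - (p.1 : ℝ)) + (p.1 : ℝ) * sc d n (fun j => (p.2.1 j).1)) • (p.2.1 i).1,
      min (p.2.1 i).2 (rad d k n (fun j => (p.2.1 j).1))),
      memB hk p.2.2 p.1.2.1 p.1.2.2⟩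
  continuous_toFun := by
    apply Continuous.subtype_mk
    refine continuous_pi fun i => Continuous.prodMk ?_ ?_
    · exact ((continuous_const.sub cont_t).add
        (cont_t.mul (continuous_sc.comp cont_cent))).smul
        ((continuous_apply i).comp cont_b).fst
    · exact ((((continuous_apply i).comp cont_b).snd).min (continuous_rad.comp cont_cent))
  map_zero_left := fun b => by
    apply Subtype.ext
    funext i
    show (((1 - ((0 : unitInterval) : ℝ)) + ((0 : unitInterval) : ℝ)
        * sc d n (fun j => (b.1 j).1)) • (b.1 i).1,
      min (b.1 i).2 (rad d k n (fun j => (b.1 j).1))) = ((f1 d k n hk b).1 i)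
    simp [f1]
  map_one_left := fun b => by
    apply Subtype.ext
    funext i
    show (((1 - ((1 : unitInterval) : ℝ)) + ((1 : unitInterval) : ℝ)
        * sc d n (fun j => (b.1 j).1)) • (b.1 i).1,
      min (b.1 i).2 (rad d k n (fun j => (b.1 j).1))) = ((f2 d k n hk b).1 i)
    simp [f2]

/-- Stage C: grow the radii to `rad c`. -/
noncomputable def HC (d k n : ℕ) (hk : 1 ≤ k) :
    ContinuousMap.Homotopy (f2 d k n hk) ((gmap d k n hk).comp (centersMap d k n)) where
  toFun := fun p =>
    ⟨fun i => (sc d n (fun j => (p.2.1 j).1) • (p.2.1 i).1,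
      (1 - (p.1 : ℝ)) * min (p.2.1 i).2 (rad d k n (fun j => (p.2.1 j).1))
        + (p.1 : ℝ) * rad d k n (fun j => (p.2.1 j).1)),
      memC hk p.2.2 p.1.2.1 p.1.2.2⟩
  continuous_toFun := by
    apply Continuous.subtype_mk
    refine continuous_pi fun i => Continuous.prodMk ?_ ?_
    · exact (continuous_sc.comp cont_cent).smul ((continuous_apply i).comp cont_b).fst
    · exact ((continuous_const.sub cont_t).mul
        ((((continuous_apply i).comp cont_b).snd).min (continuous_rad.comp cont_cent))).add
        (cont_t.mul (continuous_rad.comp cont_cent))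
  map_zero_left := fun b => by
    apply Subtype.ext
    funext i
    show (sc d n (fun j => (b.1 j).1) • (b.1 i).1,
      (1 - ((0 : unitInterval) : ℝ)) * min (b.1 i).2 (rad d k n (fun j => (b.1 j).1))
        + ((0 : unitInterval) : ℝ) * rad d k n (fun j => (b.1 j).1)) = ((f2 d k n hk b).1 i)
    simp [f2]
  map_one_left := fun b => by
    apply Subtype.ext
    funext i
    show (sc d n (fun j => (b.1 j).1) • (b.1 i).1,
      (1 - ((1 : unitInterval) : ℝ)) * min (b.1 i).2 (rad d k n (fun j => (b.1 j).1))
        + ((1 : unitInterval) : ℝ) * rad d k n (fun j => (b.1 j).1))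
      = (((gmap d k n hk).comp (centersMap d k n) b).1 i)
    simp [gmap, centersMap]

end NoKAux

/-- The map `B_d^{(k)}(n) → M_d^{(k)}(n)` recording the centers of the balls
is a homotopy equivalence. -/

theorem centersMap_homotopyEquiv (d k n : ℕ) (hd : 1 ≤ d) (hk : 2 ≤ k) :
    ∃ g : C(↥(noKEqual d k n), ↥(ballConfig d k n)),
      ((centersMap d k n).comp g).Homotopic (ContinuousMap.id _) ∧
      (g.comp (centersMap d k n)).Homotopic (ContinuousMap.id _) := by
  have hk1 : 1 ≤ k := by omega
  refine ⟨NoKAux.gmap d k n hk1, ⟨NoKAux.H1 d k n hk1⟩, ?_⟩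
  have hA : (ContinuousMap.id _).Homotopic (NoKAux.f1 d k n hk1) := ⟨NoKAux.HA d k n hk1⟩
  have hB : (NoKAux.f1 d k n hk1).Homotopic (NoKAux.f2 d k n hk1) := ⟨NoKAux.HB d k n hk1⟩
  have hC : (NoKAux.f2 d k n hk1).Homotopic
      ((NoKAux.gmap d k n hk1).comp (centersMap d k n)) := ⟨NoKAux.HC d k n hk1⟩
  exact ((hA.trans hB).trans hC).symm
end

section
/- For every integer k ≥ 1, the series g(x) = Σ_{j=0}^∞ x^{j+k} / ((j+k) · j!) converges for every real x, and the resulting function g : ℝ → ℝ has derivative g′(x) = x^{k−1} e^x at every real x. -/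
/-- For `k ≥ 1`, the series `g(x) = Σ_{j≥0} x^{j+k} / ((j+k)·j!)` converges for every
real `x`, and `g` has derivative `g'(x) = x^{k-1}·eˣ` at every real `x`. -/
theorem series_summable_and_hasDerivAt (k : ℕ) (hk : 1 ≤ k) :
    (∀ x : ℝ, Summable fun j : ℕ => x ^ (j + k) / ((j + k : ℝ) * (Nat.factorial j : ℝ))) ∧
    (∀ x : ℝ, HasDerivAt
      (fun y : ℝ => ∑' j : ℕ, y ^ (j + k) / ((j + k : ℝ) * (Nat.factorial j : ℝ)))
      (x ^ (k - 1) * Real.exp x) x) := by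
  have hsum : ∀ x : ℝ, Summable fun j : ℕ =>
      x ^ (j + k) / ((j + k : ℝ) * (Nat.factorial j : ℝ)) := by
    intro x
    apply Summable.of_norm
    apply Summable.of_nonneg_of_le (fun j => norm_nonneg _) (fun j => ?_)
      ((Real.summable_pow_div_factorial |x|).mul_left (|x| ^ k))
    have hjk : (1:ℝ) ≤ (j + k : ℝ) := by
      have : (1:ℕ) ≤ j + k := le_add_of_le_right hk
      exact_mod_cast this
    have hfac : (0:ℝ) < (Nat.factorial j : ℝ) := by positivity
    have hden : (Nat.factorial j : ℝ) ≤ (j + k : ℝ) * (Nat.factorial j : ℝ) := by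
      nlinarith
    calc ‖x ^ (j + k) / ((j + k : ℝ) * (Nat.factorial j : ℝ))‖
        = |x| ^ (j + k) / ((j + k : ℝ) * (Nat.factorial j : ℝ)) := by
          rw [norm_div, norm_pow, Real.norm_eq_abs, Real.norm_eq_abs,
            abs_of_pos (by nlinarith : (0:ℝ) < (j + k : ℝ) * (Nat.factorial j : ℝ))]
      _ ≤ |x| ^ (j + k) / (Nat.factorial j : ℝ) := by
          apply div_le_div_of_nonneg_left (by positivity) hfac hden
      _ = |x| ^ k * (|x| ^ j / (Nat.factorial j : ℝ)) := by
          rw [pow_add]; ring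
  refine ⟨hsum, fun x => ?_⟩
  set R : ℝ := |x| + 1 with hR
  have hR1 : (1:ℝ) ≤ R := by nlinarith [abs_nonneg x]
  have hu : Summable fun j : ℕ => R ^ (k - 1) * (R ^ j / (Nat.factorial j : ℝ)) :=
    (Real.summable_pow_div_factorial R).mul_left _
  have key : HasDerivAt
      (fun y : ℝ => ∑' j : ℕ, y ^ (j + k) / ((j + k : ℝ) * (Nat.factorial j : ℝ)))
      (∑' j : ℕ, x ^ (j + k - 1) / (Nat.factorial j : ℝ)) x := by
    refine hasDerivAt_tsum_of_isPreconnected (t := Metric.ball (0:ℝ) R) (y₀ := 0)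
      (g' := fun j y => y ^ (j + k - 1) / (Nat.factorial j : ℝ)) hu Metric.isOpen_ball (convex_ball (0:ℝ) R).isPreconnected
      (fun j y _ => ?_) (fun j y hy => ?_)
      (by simp only [Metric.mem_ball, dist_zero_right, norm_zero]; linarith) ?_
      (by simp only [Metric.mem_ball, dist_zero_right, Real.norm_eq_abs]; linarith)
    · -- derivative of each term
      have h1 : HasDerivAt (fun y : ℝ => y ^ (j + k))
          ((j + k : ℕ) * y ^ (j + k - 1)) y := hasDerivAt_pow (j + k) y
      have h2 := h1.div_const ((j + k : ℝ) * (Nat.factorial j : ℝ))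
      convert h2 using 1
      · rfl
      have hjk0 : ((j + k : ℕ) : ℝ) ≠ 0 := by
        have : j + k ≠ 0 := by omega
        exact_mod_cast this
      have hfac : (Nat.factorial j : ℝ) ≠ 0 := by positivity
      push_cast
      field_simp
    · -- bound
      have hyR : |y| ≤ R := by
        have := mem_ball_zero_iff.mp hy
        rw [Real.norm_eq_abs] at this
        linarith
      have : ‖y ^ (j + k - 1) / (Nat.factorial j : ℝ)‖
          = |y| ^ (j + k - 1) / (Nat.factorial j : ℝ) := by
        rw [norm_div, norm_pow, Real.norm_eq_abs, Real.norm_eq_abs,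
          abs_of_pos (by positivity : (0:ℝ) < (Nat.factorial j : ℝ))]
      rw [this]
      have hpow : |y| ^ (j + k - 1) ≤ R ^ (j + k - 1) :=
        pow_le_pow_left₀ (abs_nonneg y) hyR _
      have heq : j + k - 1 = (k - 1) + j := by omega
      calc |y| ^ (j + k - 1) / (Nat.factorial j : ℝ)
          ≤ R ^ (j + k - 1) / (Nat.factorial j : ℝ) := by
            apply div_le_div_of_nonneg_right hpow (by positivity)
        _ = R ^ (k - 1) * (R ^ j / (Nat.factorial j : ℝ)) := by
            rw [heq, pow_add]; ring
    · -- summable at 0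
      apply Summable.congr (f := fun _ : ℕ => (0:ℝ)) summable_zero
      intro j
      have : j + k ≠ 0 := by omega
      simp [zero_pow this]
  -- finish: identify the sum of derivatives
  have heq : (∑' j : ℕ, x ^ (j + k - 1) / (Nat.factorial j : ℝ))
      = x ^ (k - 1) * Real.exp x := by
    have : ∀ j : ℕ, x ^ (j + k - 1) / (Nat.factorial j : ℝ)
        = x ^ (k - 1) * (x ^ j / (Nat.factorial j : ℝ)) := by
      intro j
      have h : j + k - 1 = (k - 1) + j := by omega
      rw [h, pow_add]; ring
    rw [tsum_congr this, tsum_mul_left]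
    congr 1
    rw [Real.exp_eq_exp_ℝ, NormedSpace.exp_eq_tsum_div]
  rw [heq] at key
  exact key
end

section
/- Let n ≥ k ≥ 2 be integers. In the group algebra ℚ[Σ_n] of the symmetric group Σ_n, let a = Σ_σ sgn(σ)·σ, the sum over all permutations σ of {1, …, n} fixing each of k+1, …, n, and let b = Σ_τ τ, the sum over all permutations τ fixing each of 2, …, k. Then the left ideal ℚ[Σ_n]·(a·b), i.e. the ℚ-linear span of the elements g·a·b for g ∈ Σ_n, has dimension binom(n−1, k−1) as a ℚ-vector space. -/
open Equiv MonoidAlgebra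

/-- The antisymmetrizer `a = Σ_σ sgn(σ)·σ` over permutations of `{1,…,n}` fixing each of
`k+1,…,n` (in zero-based indexing: fixing every index `≥ k`). -/
noncomputable def hookA (n k : ℕ) : MonoidAlgebra ℚ (Equiv.Perm (Fin n)) :=
  ∑ σ ∈ Finset.univ.filter (fun σ : Equiv.Perm (Fin n) => ∀ i : Fin n, k ≤ (i : ℕ) → σ i = i),
    MonoidAlgebra.single σ ((Equiv.Perm.sign σ : ℤ) : ℚ)

/-- The symmetrizer `b = Σ_τ τ` over permutations of `{1,…,n}` fixing each of `2,…,k`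
(in zero-based indexing: fixing every index `i` with `1 ≤ i < k`). -/
noncomputable def hookB (n k : ℕ) : MonoidAlgebra ℚ (Equiv.Perm (Fin n)) :=
  ∑ τ ∈ Finset.univ.filter
      (fun τ : Equiv.Perm (Fin n) => ∀ i : Fin n, 1 ≤ (i : ℕ) → (i : ℕ) < k → τ i = i),
    MonoidAlgebra.single τ (1 : ℚ)

namespace HookProof

variable (n k : ℕ)

/-- permutations fixing every index `≥ k` -/
def FQ : Finset (Equiv.Perm (Fin n)) :=
  Finset.univ.filter (fun σ : Equiv.Perm (Fin n) => ∀ i : Fin n, k ≤ (i : ℕ) → σ i = i)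

/-- permutations fixing every index `i` with `1 ≤ i < k` -/
def FP : Finset (Equiv.Perm (Fin n)) :=
  Finset.univ.filter
    (fun τ : Equiv.Perm (Fin n) => ∀ i : Fin n, 1 ≤ (i : ℕ) → (i : ℕ) < k → τ i = i)

variable {n k}

lemma mem_FQ {σ : Equiv.Perm (Fin n)} :
    σ ∈ FQ n k ↔ ∀ i : Fin n, k ≤ (i : ℕ) → σ i = i := by
  simp [FQ]

lemma mem_FP {τ : Equiv.Perm (Fin n)} :
    τ ∈ FP n k ↔ ∀ i : Fin n, 1 ≤ (i : ℕ) → (i : ℕ) < k → τ i = i := by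
  simp [FP]

lemma one_mem_FQ : (1 : Equiv.Perm (Fin n)) ∈ FQ n k := by simp [mem_FQ]
lemma one_mem_FP : (1 : Equiv.Perm (Fin n)) ∈ FP n k := by simp [mem_FP]

lemma mul_mem_FQ {σ τ : Equiv.Perm (Fin n)} (h1 : σ ∈ FQ n k) (h2 : τ ∈ FQ n k) :
    σ * τ ∈ FQ n k := by
  rw [mem_FQ] at *
  intro i hi
  rw [Equiv.Perm.mul_apply, h2 i hi, h1 i hi]

lemma inv_mem_FQ {σ : Equiv.Perm (Fin n)} (h1 : σ ∈ FQ n k) : σ⁻¹ ∈ FQ n k := by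
  rw [mem_FQ] at *
  intro i hi
  conv_lhs => rw [← h1 i hi]
  simp

lemma mul_mem_FP {σ τ : Equiv.Perm (Fin n)} (h1 : σ ∈ FP n k) (h2 : τ ∈ FP n k) :
    σ * τ ∈ FP n k := by
  rw [mem_FP] at *
  intro i hi hi'
  rw [Equiv.Perm.mul_apply, h2 i hi hi', h1 i hi hi']

lemma hookA_eq : hookA n k = ∑ σ ∈ FQ n k,
    MonoidAlgebra.single σ ((Equiv.Perm.sign σ : ℤ) : ℚ) := rfl

lemma hookB_eq : hookB n k = ∑ τ ∈ FP n k, MonoidAlgebra.single τ (1 : ℚ) := rfl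

/-- a member of FQ maps indices `< k` to indices `< k` -/
lemma FQ_lt {σ : Equiv.Perm (Fin n)} (h : σ ∈ FQ n k) {i : Fin n} (hi : (i : ℕ) < k) :
    ((σ i : Fin n) : ℕ) < k := by
  by_contra hc
  push_neg at hc
  have := mem_FQ.mp h (σ i) hc
  have : σ (σ i) = σ i := this
  have := σ.injective this
  omega

/-- left multiplication by a sign: `s * hookA = sgn s • hookA` for `s ∈ FQ`. -/
lemma single_mul_hookA {s : Equiv.Perm (Fin n)} (hs : s ∈ FQ n k) :
    MonoidAlgebra.single s (1 : ℚ) * hookA n k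
      = ((Equiv.Perm.sign s : ℤ) : ℚ) • hookA n k := by
  rw [hookA_eq, Finset.mul_sum, Finset.smul_sum]
  refine Finset.sum_nbij' (fun σ => s * σ) (fun σ => s⁻¹ * σ) ?_ ?_ ?_ ?_ ?_
  · intro σ hσ; exact mul_mem_FQ hs hσ
  · intro σ hσ; exact mul_mem_FQ (inv_mem_FQ hs) hσ
  · intro σ _; group
  · intro σ _; group
  · intro σ hσ
    rw [MonoidAlgebra.single_mul_single, one_mul, MonoidAlgebra.smul_single']
    congr 1
    rcases Int.units_eq_one_or (Equiv.Perm.sign s) with h | h <;>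
      rcases Int.units_eq_one_or (Equiv.Perm.sign σ) with h' | h' <;>
      simp [h, h', Equiv.Perm.sign_mul]

lemma single_mul_hookB {t : Equiv.Perm (Fin n)} (ht : t ∈ FP n k) :
    MonoidAlgebra.single t (1 : ℚ) * hookB n k = hookB n k := by
  rw [hookB_eq, Finset.mul_sum]
  refine Finset.sum_nbij' (fun τ => t * τ) (fun τ => t⁻¹ * τ) ?_ ?_ ?_ ?_ ?_
  · intro τ hτ; exact mul_mem_FP ht hτ
  · intro τ hτ
    refine mul_mem_FP ?_ hτ
    rw [mem_FP] at *
    intro i hi hi'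
    conv_lhs => rw [← ht i hi hi']
    simp
  · intro τ _; group
  · intro τ _; group
  · intro τ _
    rw [MonoidAlgebra.single_mul_single, one_mul]


/-- if `u` fixes all indices `< k` then `u` commutes with `hookA`. -/
lemma hookA_comm {u : Equiv.Perm (Fin n)} (hu : ∀ i : Fin n, (i : ℕ) < k → u i = i) :
    MonoidAlgebra.single u (1 : ℚ) * hookA n k = hookA n k * MonoidAlgebra.single u (1 : ℚ) := by
  rw [hookA_eq, Finset.mul_sum, Finset.sum_mul]
  refine Finset.sum_congr rfl ?_
  intro σ hσ
  rw [MonoidAlgebra.single_mul_single, MonoidAlgebra.single_mul_single, one_mul, mul_one]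
  congr 1
  ext i
  rw [Equiv.Perm.mul_apply, Equiv.Perm.mul_apply]
  rcases lt_or_ge ((i : ℕ)) k with hik | hik
  · rw [hu i hik]
    exact congrArg Fin.val (hu (σ i) (FQ_lt hσ hik))
  · have hui : k ≤ ((u i : Fin n) : ℕ) := by
      by_contra hc
      push_neg at hc
      have h2 := hu (u i) hc
      have := u.injective h2
      rw [this] at hc
      omega
    rw [mem_FQ] at hσ
    rw [hσ i hik, hσ (u i) hui]


variable (n k) in
/-- the generators of the left ideal -/
noncomputable def f (g : Equiv.Perm (Fin n)) : MonoidAlgebra ℚ (Equiv.Perm (Fin n)) :=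
  MonoidAlgebra.single g (1 : ℚ) * (hookA n k * hookB n k)

/-- the coset relation: `f (g * s * u) = sgn s • f g` when `s ∈ FQ` and `u` fixes all
indices `< k`. -/
lemma f_coset {s u : Equiv.Perm (Fin n)} (hs : s ∈ FQ n k)
    (hu : ∀ i : Fin n, (i : ℕ) < k → u i = i) (g : Equiv.Perm (Fin n)) :
    f n k (g * s * u) = ((Equiv.Perm.sign s : ℤ) : ℚ) • f n k g := by
  have hu' : u ∈ FP n k := by
    rw [mem_FP]; intro i hi hik; exact hu i hik
  have : MonoidAlgebra.single u (1 : ℚ) * (hookA n k * hookB n k) = hookA n k * hookB n k := by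
    rw [← mul_assoc, hookA_comm hu, mul_assoc, single_mul_hookB hu']
  unfold f
  have e1 : (MonoidAlgebra.single (g * s * u) (1 : ℚ))
      = MonoidAlgebra.single g 1 * MonoidAlgebra.single s 1 * MonoidAlgebra.single u 1 := by
    rw [MonoidAlgebra.single_mul_single, MonoidAlgebra.single_mul_single]
    norm_num
  rw [e1, mul_assoc (MonoidAlgebra.single g 1 * MonoidAlgebra.single s 1), this,
    mul_assoc, ← mul_assoc (MonoidAlgebra.single s 1), single_mul_hookA hs, smul_mul_assoc,
    mul_smul_comm]


section Garnir

variable (n k) in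
/-- the set of indices `< k` -/
def Kf : Finset (Fin n) := Finset.univ.filter (fun j : Fin n => (j : ℕ) < k)

variable (n k) in
/-- enlarged antisymmetrizer over `{0,…,k-1} ∪ {m}` -/
noncomputable def Am (m : Fin n) : MonoidAlgebra ℚ (Equiv.Perm (Fin n)) :=
  ∑ σ ∈ Finset.univ.filter
      (fun σ : Equiv.Perm (Fin n) => ∀ i : Fin n, k ≤ (i : ℕ) → i ≠ m → σ i = i),
    MonoidAlgebra.single σ ((Equiv.Perm.sign σ : ℤ) : ℚ)

variable {m : Fin n} (hk : 2 ≤ k) (hm : k ≤ (m : ℕ))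

def FQm (m : Fin n) : Finset (Equiv.Perm (Fin n)) :=
  Finset.univ.filter
      (fun σ : Equiv.Perm (Fin n) => ∀ i : Fin n, k ≤ (i : ℕ) → i ≠ m → σ i = i)

lemma mem_FQm {σ : Equiv.Perm (Fin n)} :
    σ ∈ FQm (k := k) m ↔ ∀ i : Fin n, k ≤ (i : ℕ) → i ≠ m → σ i = i := by
  simp [FQm]

lemma Am_eq : Am n k m = ∑ σ ∈ FQm (k := k) m,
    MonoidAlgebra.single σ ((Equiv.Perm.sign σ : ℤ) : ℚ) := rfl

include hk hm in
lemma Am_mul_hookB : Am n k m * hookB n k = 0 := by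
  have hn0 : 0 < n := lt_of_le_of_lt (Nat.zero_le _) m.isLt
  set z : Fin n := ⟨0, hn0⟩ with hz
  have hzm : z ≠ m := by
    intro h
    have : (z : ℕ) = (m : ℕ) := congrArg Fin.val h
    simp [hz] at this
    omega
  set τ0 : Equiv.Perm (Fin n) := Equiv.swap z m with hτ0
  have hτ0P : τ0 ∈ FP n k := by
    rw [mem_FP]
    intro i hi1 hik
    refine Equiv.swap_apply_of_ne_of_ne ?_ ?_
    · intro h; rw [h] at hi1; simp [hz] at hi1
    · intro h; rw [h] at hik; omega
  have key : Am n k m * MonoidAlgebra.single τ0 (1 : ℚ) = - Am n k m := by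
    rw [Am_eq, Finset.sum_mul, ← Finset.sum_neg_distrib]
    refine Finset.sum_nbij' (fun σ => σ * τ0) (fun σ => σ * τ0) ?_ ?_ ?_ ?_ ?_
    · intro σ hσ
      rw [mem_FQm] at *
      intro i hik him
      rw [Equiv.Perm.mul_apply]
      have : τ0 i = i := by
        refine Equiv.swap_apply_of_ne_of_ne ?_ him
        intro h; rw [h] at hik; simp [hz] at hik; omega
      rw [this, hσ i hik him]
    · intro σ hσ
      rw [mem_FQm] at *
      intro i hik him
      rw [Equiv.Perm.mul_apply]
      have : τ0 i = i := by
        refine Equiv.swap_apply_of_ne_of_ne ?_ him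
        intro h; rw [h] at hik; simp [hz] at hik; omega
      rw [this, hσ i hik him]
    · intro σ _
      show σ * τ0 * τ0 = σ
      rw [mul_assoc, hτ0, Equiv.swap_mul_self, mul_one]
    · intro σ _
      show σ * τ0 * τ0 = σ
      rw [mul_assoc, hτ0, Equiv.swap_mul_self, mul_one]
    · intro σ _
      show MonoidAlgebra.single σ ((Equiv.Perm.sign σ : ℤ) : ℚ) * MonoidAlgebra.single τ0 1
        = -MonoidAlgebra.single (σ * τ0) ((Equiv.Perm.sign (σ * τ0) : ℤ) : ℚ)
      rw [MonoidAlgebra.single_mul_single, mul_one, ← MonoidAlgebra.single_neg]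
      congr 1
      rw [Equiv.Perm.sign_mul, hτ0, Equiv.Perm.sign_swap hzm]
      rcases Int.units_eq_one_or (Equiv.Perm.sign σ) with h | h <;> simp [h]
  have h2 : Am n k m * hookB n k = - (Am n k m * hookB n k) := by
    conv_lhs => rw [← single_mul_hookB hτ0P, ← mul_assoc, key]
    rw [neg_mul]
  have := add_eq_zero_iff_eq_neg.mpr h2
  have h3 : (2 : ℚ) • (Am n k m * hookB n k) = 0 := by
    rw [two_smul]; exact this
  simpa using (smul_eq_zero.mp h3).resolve_left (by norm_num)

include hm in
lemma Am_decomp :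
    Am n k m = hookA n k
      - ∑ j ∈ Kf n k, MonoidAlgebra.single (Equiv.swap j m) (1 : ℚ) * hookA n k := by
  have hmK : m ∉ Kf n k := by simp [Kf]; omega
  have hmaps : ∀ σ ∈ FQm (k := k) m, σ m ∈ insert m (Kf n k) := by
    intro σ hσ
    rw [mem_FQm] at hσ
    by_cases hlt : ((σ m : Fin n) : ℕ) < k
    · exact Finset.mem_insert_of_mem (by simp [Kf, hlt])
    · push_neg at hlt
      rcases eq_or_ne (σ m) m with h | h
      · rw [h]; exact Finset.mem_insert_self _ _
      · have := hσ (σ m) hlt h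
        have := σ.injective this
        rw [this] at h
        exact absurd rfl h
  have hfib := Finset.sum_fiberwise_of_maps_to hmaps
    (fun σ : Equiv.Perm (Fin n) => MonoidAlgebra.single σ ((Equiv.Perm.sign σ : ℤ) : ℚ))
  rw [Am_eq, ← hfib, Finset.sum_insert hmK]
  have hTm : (∑ σ ∈ (FQm (k := k) m).filter (fun σ => σ m = m),
      MonoidAlgebra.single σ ((Equiv.Perm.sign σ : ℤ) : ℚ)) = hookA n k := by
    rw [hookA_eq]
    congr 1
    ext σ
    simp only [Finset.mem_filter, mem_FQm, mem_FQ]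
    constructor
    · rintro ⟨h1, h2⟩ i hik
      rcases eq_or_ne i m with rfl | h
      · exact h2
      · exact h1 i hik h
    · intro h
      exact ⟨fun i hik _ => h i hik, h m hm⟩
  have hTj : ∀ j ∈ Kf n k, (∑ σ ∈ (FQm (k := k) m).filter (fun σ => σ m = j),
      MonoidAlgebra.single σ ((Equiv.Perm.sign σ : ℤ) : ℚ))
      = -(MonoidAlgebra.single (Equiv.swap j m) (1 : ℚ) * hookA n k) := by
    intro j hj
    have hjk : (j : ℕ) < k := by simpa [Kf] using hj
    have hjm : j ≠ m := by
      intro h; rw [h] at hjk; omega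
    rw [hookA_eq, Finset.mul_sum, ← Finset.sum_neg_distrib]
    refine Finset.sum_nbij' (fun σ => Equiv.swap j m * σ) (fun σ => Equiv.swap j m * σ)
      ?_ ?_ ?_ ?_ ?_
    · intro σ hσ
      rw [Finset.mem_filter, mem_FQm] at hσ
      obtain ⟨h1, h2⟩ := hσ
      rw [mem_FQ]
      intro i hik
      rcases eq_or_ne i m with rfl | h
      · rw [Equiv.Perm.mul_apply, h2, Equiv.swap_apply_left]
      · rw [Equiv.Perm.mul_apply, h1 i hik h]
        refine Equiv.swap_apply_of_ne_of_ne ?_ h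
        intro hh; rw [hh] at hik; omega
    · intro σ hσ
      rw [mem_FQ] at hσ
      rw [Finset.mem_filter, mem_FQm]
      constructor
      · intro i hik him
        rw [Equiv.Perm.mul_apply, hσ i hik]
        refine Equiv.swap_apply_of_ne_of_ne ?_ him
        intro hh; rw [hh] at hik; omega
      · rw [Equiv.Perm.mul_apply, hσ m hm, Equiv.swap_apply_right]
    · intro σ _
      show Equiv.swap j m * (Equiv.swap j m * σ) = σ
      rw [← mul_assoc, Equiv.swap_mul_self, one_mul]
    · intro σ _
      show Equiv.swap j m * (Equiv.swap j m * σ) = σ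
      rw [← mul_assoc, Equiv.swap_mul_self, one_mul]
    · intro σ hσ
      show MonoidAlgebra.single σ ((Equiv.Perm.sign σ : ℤ) : ℚ)
        = -(MonoidAlgebra.single (Equiv.swap j m) (1:ℚ)
            * MonoidAlgebra.single (Equiv.swap j m * σ)
              ((Equiv.Perm.sign (Equiv.swap j m * σ) : ℤ) : ℚ))
      rw [MonoidAlgebra.single_mul_single, one_mul, ← mul_assoc, Equiv.swap_mul_self, one_mul,
        ← MonoidAlgebra.single_neg]
      congr 1
      rw [Equiv.Perm.sign_mul, Equiv.Perm.sign_swap hjm]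
      rcases Int.units_eq_one_or (Equiv.Perm.sign σ) with h | h <;> simp [h]
  rw [hTm, Finset.sum_congr rfl hTj, Finset.sum_neg_distrib, ← sub_eq_add_neg]

include hk hm in
/-- the Garnir relation -/
lemma garnir (g : Equiv.Perm (Fin n)) :
    f n k g = ∑ j ∈ Kf n k, f n k (g * Equiv.swap j m) := by
  have h0 : hookA n k * hookB n k
      = ∑ j ∈ Kf n k, MonoidAlgebra.single (Equiv.swap j m) (1 : ℚ)
          * (hookA n k * hookB n k) := by
    have h := Am_mul_hookB hk hm (m := m)
    rw [Am_decomp hm, sub_mul, Finset.sum_mul, sub_eq_zero] at h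
    exact h.trans (Finset.sum_congr rfl fun j _ => mul_assoc _ _ _)
  unfold f
  conv_lhs => rw [h0]
  rw [Finset.mul_sum]
  refine Finset.sum_congr rfl fun j _ => ?_
  rw [← mul_assoc, MonoidAlgebra.single_mul_single, mul_one]

end Garnir


section Lam

variable (n k) in
/-- the coefficient-sum functional used to separate the generators -/
noncomputable def lam (g0 : Equiv.Perm (Fin n)) :
    MonoidAlgebra ℚ (Equiv.Perm (Fin n)) →ₗ[ℚ] ℚ where
  toFun x := ∑ h ∈ Finset.univ.filter
      (fun h : Equiv.Perm (Fin n) => ∀ i : Fin n, 1 ≤ (i : ℕ) → (i : ℕ) < k → h i = g0 i), x.coeff h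
  map_add' x y := by
    rw [Finset.sum_congr rfl (fun h _ => show (x + y).coeff h = x.coeff h + y.coeff h from Finsupp.add_apply x.coeff y.coeff h), Finset.sum_add_distrib]
  map_smul' c x := by
    rw [Finset.sum_congr rfl (fun h _ => MonoidAlgebra.coeff_smul_apply c x h), RingHom.id_apply,
      Finset.smul_sum]

lemma lam_single (g0 h : Equiv.Perm (Fin n)) (c : ℚ) :
    lam n k g0 (MonoidAlgebra.single h c)
      = if (∀ i : Fin n, 1 ≤ (i : ℕ) → (i : ℕ) < k → h i = g0 i) then c else 0 := by
  show (∑ h' ∈ Finset.univ.filter _, (MonoidAlgebra.single h c).coeff h') = _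
  have : ∀ h' : Equiv.Perm (Fin n),
      (MonoidAlgebra.single h c).coeff h' = if h' = h then c else 0 := by
    intro h'
    rw [MonoidAlgebra.single_apply]
    simp [eq_comm]
  rw [Finset.sum_congr rfl (fun h' _ => this h'), Finset.sum_ite_eq']
  simp [Finset.mem_filter]

/-- evaluation of `lam` on an ideal generator -/
lemma lam_f (g0 g : Equiv.Perm (Fin n)) :
    lam n k g0 (f n k g) = ∑ σ ∈ FQ n k, ∑ τ ∈ FP n k,
      (if (∀ i : Fin n, 1 ≤ (i : ℕ) → (i : ℕ) < k → g (σ i) = g0 i)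
        then ((Equiv.Perm.sign σ : ℤ) : ℚ) else 0) := by
  unfold f
  rw [hookA_eq, hookB_eq, Finset.sum_mul_sum, Finset.mul_sum, map_sum]
  refine Finset.sum_congr rfl fun σ hσ => ?_
  rw [Finset.mul_sum, map_sum]
  refine Finset.sum_congr rfl fun τ hτ => ?_
  rw [MonoidAlgebra.single_mul_single, MonoidAlgebra.single_mul_single, one_mul, mul_one,
    lam_single]
  congr 1
  apply propext
  constructor
  · intro hc i h1 h2
    have := hc i h1 h2
    rwa [Equiv.Perm.mul_apply, Equiv.Perm.mul_apply, mem_FP.mp hτ i h1 h2] at this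
  · intro hc i h1 h2
    rw [Equiv.Perm.mul_apply, Equiv.Perm.mul_apply, mem_FP.mp hτ i h1 h2]
    exact hc i h1 h2

/-- an element of `FQ` fixing all indices in `[1,k)` is the identity -/
lemma FQ_eq_one {σ : Equiv.Perm (Fin n)} (hσ : σ ∈ FQ n k)
    (hfix : ∀ i : Fin n, 1 ≤ (i : ℕ) → (i : ℕ) < k → σ i = i) : σ = 1 := by
  have key : ∀ i : Fin n, 1 ≤ (i : ℕ) → σ i = i := by
    intro i h1
    rcases Nat.lt_or_ge ((i : ℕ)) k with h2 | h2
    · exact hfix i h1 h2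
    · exact mem_FQ.mp hσ i h2
  ext i
  show ((σ i : Fin n) : ℕ) = (i : ℕ)
  rcases Nat.eq_zero_or_pos ((i : ℕ)) with h0 | h0
  · rcases Nat.eq_zero_or_pos ((σ i : Fin n) : ℕ) with h0' | h0'
    · rw [h0, h0']
    · have := key (σ i) h0'
      have := σ.injective this
      rw [this, h0]
  · rw [key i h0]

lemma lam_f_eq_zero {g0 g : Equiv.Perm (Fin n)}
    (h : ∃ i : Fin n, 1 ≤ (i : ℕ) ∧ (i : ℕ) < k ∧ g0 i ∉ (Kf n k).image g) :
    lam n k g0 (f n k g) = 0 := by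
  rw [lam_f]
  refine Finset.sum_eq_zero fun σ hσ => Finset.sum_eq_zero fun τ _ => ?_
  rw [if_neg]
  intro hc
  obtain ⟨i, h1, h2, h3⟩ := h
  refine h3 ?_
  rw [← hc i h1 h2]
  refine Finset.mem_image_of_mem g ?_
  simp [Kf]
  exact FQ_lt hσ h2

lemma lam_f_diag (g0 : Equiv.Perm (Fin n)) :
    lam n k g0 (f n k g0) = ((FP n k).card : ℚ) := by
  rw [lam_f]
  have hinner : ∀ σ ∈ FQ n k, (∑ τ ∈ FP n k,
      (if (∀ i : Fin n, 1 ≤ (i : ℕ) → (i : ℕ) < k → g0 (σ i) = g0 i)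
        then ((Equiv.Perm.sign σ : ℤ) : ℚ) else 0))
      = if σ = 1 then ((FP n k).card : ℚ) else 0 := by
    intro σ hσ
    rcases eq_or_ne σ 1 with rfl | hne
    · rw [if_pos rfl]
      rw [Finset.sum_congr rfl (fun τ _ => if_pos (fun i _ _ => by simp))]
      simp
    · rw [if_neg hne]
      refine Finset.sum_eq_zero fun τ _ => ?_
      rw [if_neg]
      intro hc
      exact hne (FQ_eq_one hσ (fun i h1 h2 => g0.injective (hc i h1 h2)))
  rw [Finset.sum_congr rfl hinner, Finset.sum_ite_eq' (FQ n k) 1]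
  rw [if_pos one_mem_FQ]

end Lam


section Exists

lemma card_Kf (hn : k ≤ n) : (Kf n k).card = k := by
  have : Kf n k = (Finset.univ : Finset (Fin k)).map (Fin.castLEEmb hn) := by
    ext i
    simp only [Kf, Finset.mem_filter, Finset.mem_univ, true_and, Finset.mem_map]
    constructor
    · intro h
      exact ⟨⟨(i : ℕ), h⟩, rfl⟩
    · rintro ⟨j, rfl⟩
      simp [Fin.castLEEmb]
  rw [this, Finset.card_map, Finset.card_univ, Fintype.card_fin]

lemma exists_g (hn : k ≤ n) (C : Finset (Fin n)) (hC : C.card = k) :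
    ∃ g : Equiv.Perm (Fin n), ∀ i : Fin n, ((i : ℕ) < k ↔ g i ∈ C) := by
  have card1 : Fintype.card {i : Fin n // (i : ℕ) < k} = k := by
    rw [Fintype.card_subtype]
    exact card_Kf hn
  have card2 : Fintype.card {x : Fin n // x ∈ C} = k := by
    rw [Fintype.card_coe]; exact hC
  have card1c : Fintype.card {i : Fin n // ¬ ((i : ℕ) < k)} = n - k := by
    rw [Fintype.card_subtype_compl, card1, Fintype.card_fin]
  have card2c : Fintype.card {x : Fin n // ¬ (x ∈ C)} = n - k := by
    rw [Fintype.card_subtype_compl, card2, Fintype.card_fin]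
  let e1 : {i : Fin n // (i : ℕ) < k} ≃ {x : Fin n // x ∈ C} :=
    Fintype.equivOfCardEq (card1.trans card2.symm)
  let e2 : {i : Fin n // ¬ ((i : ℕ) < k)} ≃ {x : Fin n // ¬ (x ∈ C)} :=
    Fintype.equivOfCardEq (card1c.trans card2c.symm)
  refine ⟨(Equiv.sumCompl (fun i : Fin n => (i : ℕ) < k)).symm.trans
    ((e1.sumCongr e2).trans (Equiv.sumCompl (fun x : Fin n => x ∈ C))), ?_⟩
  intro i
  by_cases h : (i : ℕ) < k
  · have : ((Equiv.sumCompl (fun i : Fin n => (i : ℕ) < k)).symm.trans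
        ((e1.sumCongr e2).trans (Equiv.sumCompl (fun x : Fin n => x ∈ C)))) i
        = ↑(e1 ⟨i, h⟩) := by
      rw [Equiv.trans_apply, Equiv.sumCompl_symm_apply_of_pos (p := fun i : Fin n => (i : ℕ) < k) h, Equiv.trans_apply,
        Equiv.sumCongr_apply, Sum.map_inl, Equiv.sumCompl_apply_inl]
    rw [this]
    exact iff_of_true h (e1 ⟨i, h⟩).2
  · have : ((Equiv.sumCompl (fun i : Fin n => (i : ℕ) < k)).symm.trans
        ((e1.sumCongr e2).trans (Equiv.sumCompl (fun x : Fin n => x ∈ C)))) i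
        = ↑(e2 ⟨i, h⟩) := by
      rw [Equiv.trans_apply, Equiv.sumCompl_symm_apply_of_neg (p := fun i : Fin n => (i : ℕ) < k) h, Equiv.trans_apply,
        Equiv.sumCongr_apply, Sum.map_inr, Equiv.sumCompl_apply_inr]
    rw [this]
    exact iff_of_false h (e2 ⟨i, h⟩).2

lemma exists_g0 (hk : 2 ≤ k) (hn : k ≤ n) (C : Finset (Fin n)) (hC : C.card = k)
    (h0 : ∃ x ∈ C, (x : ℕ) = 0) :
    ∃ g : Equiv.Perm (Fin n), (∀ i : Fin n, (i : ℕ) = 0 → g i = i)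
      ∧ (∀ i : Fin n, ((i : ℕ) < k ↔ g i ∈ C)) := by
  obtain ⟨g1, hg1⟩ := exists_g hn C hC
  obtain ⟨x0, hx0C, hx0⟩ := h0
  set j : Fin n := g1⁻¹ x0 with hjdef
  have hg1j : g1 j = x0 := by simp [hjdef]
  have hj : (j : ℕ) < k := by
    rw [hg1 j, hg1j]; exact hx0C
  refine ⟨g1 * Equiv.swap j x0, ?_, ?_⟩
  · intro i hi
    have hix0 : i = x0 := Fin.ext (by rw [hi, hx0])
    subst hix0
    show g1 (Equiv.swap j i i) = i
    rw [Equiv.swap_apply_right, hg1j]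
  · intro i
    show (i : ℕ) < k ↔ g1 (Equiv.swap j x0 i) ∈ C
    rcases eq_or_ne i j with rfl | hij
    · rw [Equiv.swap_apply_left]
      refine iff_of_true hj ?_
      rw [← hg1]
      rw [hx0]; omega
    · rcases eq_or_ne i x0 with rfl | hix0
      · rw [Equiv.swap_apply_right, hg1j]
        refine iff_of_true ?_ hx0C
        rw [hx0]; omega
      · rw [Equiv.swap_apply_of_ne_of_ne hij hix0]
        exact hg1 i

end Exists


section Main

variable (n k) in
/-- index type: `k`-subsets of `Fin n` containing the index `0` -/
abbrev Idx : Type := {C : Finset (Fin n) // C.card = k ∧ ∃ x ∈ C, (x : ℕ) = 0}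

variable (hk : 2 ≤ k) (hn : k ≤ n)

/-- a chosen permutation sending `{0,…,k-1}` onto `C` and fixing the index `0` -/
noncomputable def gC (C : Idx n k) : Equiv.Perm (Fin n) :=
  (exists_g0 hk hn C.1 C.2.1 C.2.2).choose

lemma gC_zero (C : Idx n k) : ∀ i : Fin n, (i : ℕ) = 0 → gC hk hn C i = i :=
  (exists_g0 hk hn C.1 C.2.1 C.2.2).choose_spec.1

lemma gC_mem (C : Idx n k) : ∀ i : Fin n, ((i : ℕ) < k ↔ gC hk hn C i ∈ C.1) :=
  (exists_g0 hk hn C.1 C.2.1 C.2.2).choose_spec.2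

lemma gC_image (C : Idx n k) : (Kf n k).image (gC hk hn C) = C.1 := by
  apply Finset.eq_of_subset_of_card_le
  · intro x hx
    rw [Finset.mem_image] at hx
    obtain ⟨i, hi, rfl⟩ := hx
    exact (gC_mem hk hn C i).mp (by simpa [Kf] using hi)
  · rw [Finset.card_image_of_injective _ (gC hk hn C).injective, card_Kf hn, C.2.1]

/-- the candidate basis of the ideal -/
noncomputable def w (C : Idx n k) : MonoidAlgebra ℚ (Equiv.Perm (Fin n)) :=
  f n k (gC hk hn C)

include hk hn in
lemma w_indep : LinearIndependent ℚ (w hk hn) := by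
  rw [linearIndependent_iff']
  intro s c hsum C hC
  have happ := congrArg (lam n k (gC hk hn C)) hsum
  rw [map_sum, map_zero] at happ
  simp only [map_smul, smul_eq_mul] at happ
  rw [Finset.sum_eq_single C] at happ
  · rw [w, lam_f_diag] at happ
    have hcard : ((FP n k).card : ℚ) ≠ 0 := by
      have : (FP n k).Nonempty := ⟨1, one_mem_FP⟩
      exact_mod_cast Nat.cast_ne_zero.mpr (Finset.card_ne_zero.mpr this)
    exact (mul_eq_zero.mp happ).resolve_right hcard
  · intro C' _ hne
    rw [w, lam_f_eq_zero, mul_zero]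
    -- find an element of C not in C'
    have hCne : C.1 ≠ C'.1 := fun h => hne (Subtype.ext h.symm)
    have hex : ∃ x ∈ C.1, x ∉ C'.1 := by
      by_contra hcon
      push_neg at hcon
      refine hCne ?_
      refine Finset.eq_of_subset_of_card_le hcon ?_
      rw [C.2.1, C'.2.1]
    obtain ⟨x, hxC, hxC'⟩ := hex
    set i : Fin n := (gC hk hn C)⁻¹ x with hidef
    have hgi : gC hk hn C i = x := by simp [hidef]
    have hik : (i : ℕ) < k := (gC_mem hk hn C i).mpr (by rw [hgi]; exact hxC)
    have hi1 : 1 ≤ (i : ℕ) := by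
      rcases Nat.eq_zero_or_pos ((i : ℕ)) with h0 | h0
      · exfalso
        have : gC hk hn C i = i := gC_zero hk hn C i h0
        rw [this] at hgi
        obtain ⟨y, hyC', hy0⟩ := C'.2.2
        have : y = x := Fin.ext (by rw [hy0, ← hgi, h0])
        rw [this] at hyC'
        exact hxC' hyC'
      · exact h0
    exact ⟨i, hi1, hik, by rw [gC_image hk hn C', hgi]; exact hxC'⟩
  · intro h
    exact absurd hC h

include hk hn in
lemma mem_span_w {g : Equiv.Perm (Fin n)}
    (hg : ∃ i : Fin n, (i : ℕ) < k ∧ ((g i : Fin n) : ℕ) = 0) :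
    f n k g ∈ Submodule.span ℚ (Set.range (w hk hn)) := by
  obtain ⟨i0, hi0k, hi00⟩ := hg
  have hcard : ((Kf n k).image g).card = k := by
    rw [Finset.card_image_of_injective _ g.injective, card_Kf hn]
  have h0 : ∃ x ∈ (Kf n k).image g, (x : ℕ) = 0 :=
    ⟨g i0, Finset.mem_image_of_mem g (by simp [Kf, hi0k]), hi00⟩
  set Ci : Idx n k := ⟨(Kf n k).image g, hcard, h0⟩ with hCi
  set g0 := gC hk hn Ci with hg0
  set h : Equiv.Perm (Fin n) := g0⁻¹ * g with hh
  have hiff : ∀ i : Fin n, ((i : ℕ) < k ↔ ((h i : Fin n) : ℕ) < k) := by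
    intro i
    constructor
    · intro hi
      have hgi : g i ∈ Ci.1 := Finset.mem_image_of_mem g (by simp [Kf, hi])
      have : g0 (h i) = g i := by
        rw [hh]; simp
      refine (gC_mem hk hn Ci (h i)).mpr ?_
      rw [this]; exact hgi
    · intro hi
      have : g0 (h i) = g i := by rw [hh]; simp
      have hgi : g i ∈ Ci.1 := by
        rw [← this]
        exact (gC_mem hk hn Ci (h i)).mp hi
      rw [hCi] at hgi
      rw [Finset.mem_image] at hgi
      obtain ⟨j, hj, hji⟩ := hgi
      have : j = i := g.injective hji
      rw [← this]
      simpa [Kf] using hj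
  set σ : Equiv.Perm (Fin n)
    := Equiv.Perm.ofSubtype (h.subtypePerm (fun i => (hiff i).symm) : Equiv.Perm {i : Fin n // (i : ℕ) < k})
    with hσ
  have hσFQ : σ ∈ FQ n k := by
    rw [mem_FQ]
    intro i hik
    rw [hσ]
    exact Equiv.Perm.ofSubtype_apply_of_not_mem (h.subtypePerm (fun i => (hiff i).symm)) (by omega)
  have hσi : ∀ i : Fin n, (i : ℕ) < k → σ i = h i := by
    intro i hi
    rw [hσ]
    exact Equiv.Perm.ofSubtype_apply_of_mem (h.subtypePerm (fun i => (hiff i).symm)) hi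
  set u : Equiv.Perm (Fin n) := σ⁻¹ * h with hu
  have hufix : ∀ i : Fin n, (i : ℕ) < k → u i = i := by
    intro i hi
    rw [hu]
    show σ⁻¹ (h i) = i
    rw [← hσi i hi]
    simp
  have hdecomp : g = g0 * σ * u := by
    rw [hu, hh]
    group
  rw [hdecomp, f_coset hσFQ hufix g0]
  exact Submodule.smul_mem _ _ (Submodule.subset_span ⟨Ci, rfl⟩)

include hk hn in
lemma span_f_eq :
    Submodule.span ℚ (Set.range (f n k)) = Submodule.span ℚ (Set.range (w hk hn)) := by
  apply le_antisymm
  · rw [Submodule.span_le]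
    rintro _ ⟨g, rfl⟩
    by_cases hg : ∃ i : Fin n, (i : ℕ) < k ∧ ((g i : Fin n) : ℕ) = 0
    · exact mem_span_w hk hn hg
    · push_neg at hg
      have hn0 : 0 < n := by omega
      set z : Fin n := ⟨0, hn0⟩ with hz
      set m : Fin n := g⁻¹ z with hm'
      have hgm : g m = z := by rw [hm']; simp
      have hm : k ≤ (m : ℕ) := by
        by_contra hc
        push_neg at hc
        have := hg m hc
        rw [hgm] at this
        exact this rfl
      rw [garnir hk hm g]
      refine Submodule.sum_mem _ fun j hj => ?_
      have hjk : (j : ℕ) < k := by simpa [Kf] using hj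
      refine mem_span_w hk hn ⟨j, hjk, ?_⟩
      show (((g * Equiv.swap j m) j : Fin n) : ℕ) = 0
      rw [Equiv.Perm.mul_apply, Equiv.swap_apply_left, hgm]
  · rw [Submodule.span_le]
    rintro _ ⟨C, rfl⟩
    exact Submodule.subset_span ⟨gC hk hn C, rfl⟩

include hk hn in
lemma card_Idx : Fintype.card (Idx n k) = (n - 1).choose (k - 1) := by
  have hn0 : 0 < n := by omega
  set z : Fin n := ⟨0, hn0⟩ with hz
  have hmem : ∀ C : Finset (Fin n), ((∃ x ∈ C, (x : ℕ) = 0) ↔ z ∈ C) := by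
    intro C
    constructor
    · rintro ⟨x, hxC, hx0⟩
      have : x = z := Fin.ext (by rw [hx0, hz])
      rwa [← this]
    · intro hzC
      exact ⟨z, hzC, rfl⟩
  rw [Fintype.card_subtype]
  have hset : (Finset.univ.filter
      (fun C : Finset (Fin n) => C.card = k ∧ ∃ x ∈ C, (x : ℕ) = 0))
      = Finset.univ.filter (fun C : Finset (Fin n) => C.card = k ∧ z ∈ C) := by
    ext C
    simp only [Finset.mem_filter, Finset.mem_univ, true_and]
    rw [hmem C]
  rw [hset]
  have hbij : (Finset.univ.filter (fun C : Finset (Fin n) => C.card = k ∧ z ∈ C)).card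
      = ((Finset.univ.erase z).powersetCard (k - 1)).card := by
    refine Finset.card_bij (fun C _ => C.erase z) ?_ ?_ ?_
    · intro C hC
      rw [Finset.mem_filter] at hC
      obtain ⟨-, h1, h2⟩ := hC
      rw [Finset.mem_powersetCard]
      constructor
      · exact Finset.erase_subset_erase z (Finset.subset_univ C)
      · rw [Finset.card_erase_of_mem h2, h1]
    · intro C1 hC1 C2 hC2 heq
      rw [Finset.mem_filter] at hC1 hC2
      have heq' : C1.erase z = C2.erase z := heq
      rw [← Finset.insert_erase hC1.2.2, heq', Finset.insert_erase hC2.2.2]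
    · intro D hD
      rw [Finset.mem_powersetCard] at hD
      obtain ⟨hDsub, hDcard⟩ := hD
      have hzD : z ∉ D := fun h => Finset.notMem_erase z Finset.univ (hDsub h)
      refine ⟨insert z D, ?_, ?_⟩
      · rw [Finset.mem_filter]
        refine ⟨Finset.mem_univ _, ?_, Finset.mem_insert_self _ _⟩
        rw [Finset.card_insert_of_notMem hzD, hDcard]
        omega
      · show (insert z D).erase z = D
        rw [Finset.erase_insert hzD]
  rw [hbij, Finset.card_powersetCard, Finset.card_erase_of_mem (Finset.mem_univ z),
    Finset.card_univ, Fintype.card_fin]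

end Main

end HookProof


/-- The ℚ-linear span of the elements `g·a·b`, `g ∈ Σₙ`, i.e. the left ideal
`ℚ[Σₙ]·(a·b)`, has dimension `binom(n-1, k-1)`. -/
theorem hook_ideal_finrank (n k : ℕ) (hk : 2 ≤ k) (hn : k ≤ n) :
    Module.finrank ℚ
      ↥(Submodule.span ℚ (Set.range fun g : Equiv.Perm (Fin n) =>
          MonoidAlgebra.single g (1 : ℚ) * (hookA n k * hookB n k))) =
      Nat.choose (n - 1) (k - 1) := by
  have hrange : (Set.range fun g : Equiv.Perm (Fin n) =>
      MonoidAlgebra.single g (1 : ℚ) * (hookA n k * hookB n k))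
      = Set.range (HookProof.f n k) := rfl
  rw [hrange, HookProof.span_f_eq hk hn,
    finrank_span_eq_card (HookProof.w_indep hk hn),
    HookProof.card_Idx hk hn]
end

section
/- Let n ≥ k ≥ 2 be integers. In the group algebra ℚ[Σ_n], with a = Σ_σ sgn(σ)·σ summed over permutations fixing each of k+1, …, n, and b = Σ_τ τ summed over permutations fixing each of 2, …, k, the left ideal ℚ[Σ_n]·(a·b) is a simple (irreducible) module over ℚ[Σ_n]; it is the irreducible representation of Σ_n of hook type. -/
section HookLemmas

open Finset MonoidAlgebra Equiv Equiv.Perm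

variable {n k : ℕ}

lemma sign_sq (p : Equiv.Perm (Fin n)) :
    ((Equiv.Perm.sign p : ℤ) : ℚ) * ((Equiv.Perm.sign p : ℤ) : ℚ) = 1 := by
  rw [← Int.cast_mul, ← Units.val_mul, Int.units_mul_self, Units.val_one, Int.cast_one]

lemma hookA_mul_single (p : Equiv.Perm (Fin n))
    (hp : ∀ i : Fin n, k ≤ (i : ℕ) → p i = i) :
    hookA n k * MonoidAlgebra.single p 1 = ((Equiv.Perm.sign p : ℤ) : ℚ) • hookA n k := by
  unfold hookA
  rw [Finset.sum_mul, Finset.smul_sum]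
  refine Finset.sum_bij' (fun σ _ => σ * p) (fun σ _ => σ * p⁻¹) ?_ ?_ ?_ ?_ ?_
  · intro σ hσ
    simp only [Finset.mem_filter, Finset.mem_univ, true_and] at hσ ⊢
    intro i hi
    simp [Equiv.Perm.mul_apply, hp i hi, hσ i hi]
  · intro σ hσ
    simp only [Finset.mem_filter, Finset.mem_univ, true_and] at hσ ⊢
    intro i hi
    have hpi : p⁻¹ i = i := by
      rw [Equiv.Perm.inv_eq_iff_eq]; exact (hp i hi).symm
    simp [Equiv.Perm.mul_apply, hpi, hσ i hi]
  · intro σ _; simp [mul_assoc]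
  · intro σ _; simp [mul_assoc]
  · intro σ _
    rw [MonoidAlgebra.single_mul_single, MonoidAlgebra.smul_single', map_mul]
    congr 1
    push_cast
    rw [mul_one]
    rw [mul_comm ((Equiv.Perm.sign σ : ℤ) : ℚ), ← mul_assoc, sign_sq, one_mul]

lemma single_mul_hookB (q : Equiv.Perm (Fin n))
    (hq : ∀ i : Fin n, 1 ≤ (i : ℕ) → (i : ℕ) < k → q i = i) :
    MonoidAlgebra.single q 1 * hookB n k = hookB n k := by
  unfold hookB
  rw [Finset.mul_sum]
  refine Finset.sum_bij' (fun τ _ => q * τ) (fun τ _ => q⁻¹ * τ) ?_ ?_ ?_ ?_ ?_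
  · intro τ hτ
    simp only [Finset.mem_filter, Finset.mem_univ, true_and] at hτ ⊢
    intro i h1 h2
    simp [Equiv.Perm.mul_apply, hτ i h1 h2, hq i h1 h2]
  · intro τ hτ
    simp only [Finset.mem_filter, Finset.mem_univ, true_and] at hτ ⊢
    intro i h1 h2
    have hqi : q⁻¹ i = i := by
      rw [Equiv.Perm.inv_eq_iff_eq]; exact (hq i h1 h2).symm
    simp [Equiv.Perm.mul_apply, hτ i h1 h2, hqi]
  · intro τ _; simp [← mul_assoc]
  · intro τ _; simp [← mul_assoc]
  · intro τ _
    rw [MonoidAlgebra.single_mul_single, mul_one]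

lemma bigS_card (hn : k ≤ n) :
    (Finset.univ.filter (fun i : Fin n => (i : ℕ) < k)).card = k := by
  have : Finset.univ.filter (fun i : Fin n => (i : ℕ) < k)
      = Finset.map (Fin.castLEEmb hn) Finset.univ := by
    ext i
    simp only [Finset.mem_filter, Finset.mem_univ, true_and, Finset.mem_map,
      Fin.castLEEmb_apply]
    constructor
    · intro h; exact ⟨⟨(i : ℕ), h⟩, Fin.ext rfl⟩
    · rintro ⟨j, rfl⟩; exact j.isLt
  rw [this, Finset.card_map, Finset.card_univ, Fintype.card_fin]

lemma T_card (hk : 2 ≤ k) (hn : k ≤ n) :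
    (Finset.univ.filter (fun i : Fin n => 1 ≤ (i : ℕ) ∧ (i : ℕ) < k)).card = k - 1 := by
  haveI : NeZero n := ⟨by omega⟩
  have hT : Finset.univ.filter (fun i : Fin n => 1 ≤ (i : ℕ) ∧ (i : ℕ) < k)
      = (Finset.univ.filter (fun i : Fin n => (i : ℕ) < k)).erase 0 := by
    ext i
    simp only [Finset.mem_filter, Finset.mem_univ, true_and, Finset.mem_erase]
    constructor
    · rintro ⟨h1, h2⟩
      exact ⟨fun h => by simp [h] at h1, h2⟩
    · rintro ⟨h1, h2⟩
      refine ⟨?_, h2⟩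
      refine Nat.one_le_iff_ne_zero.mpr (fun h0 => h1 (Fin.ext (by simp [h0])))
  rw [hT, Finset.card_erase_of_mem, bigS_card hn]
  simp only [Finset.mem_filter, Finset.mem_univ, true_and, Fin.val_zero]
  omega

lemma exists_pq (hk : 2 ≤ k) (hn : k ≤ n) (g : Equiv.Perm (Fin n))
    (hg : ∀ i : Fin n, 1 ≤ (i : ℕ) → (i : ℕ) < k → ((g i : Fin n) : ℕ) < k) :
    ∃ p q : Equiv.Perm (Fin n), (∀ i : Fin n, k ≤ (i : ℕ) → p i = i) ∧
      (∀ i : Fin n, 1 ≤ (i : ℕ) → (i : ℕ) < k → q i = i) ∧ g = p * q := by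
  haveI : NeZero n := ⟨by omega⟩
  set T := Finset.univ.filter (fun i : Fin n => 1 ≤ (i : ℕ) ∧ (i : ℕ) < k) with hTdef
  set bigS := Finset.univ.filter (fun i : Fin n => (i : ℕ) < k) with hSdef
  have himg : T.image g ⊆ bigS := by
    intro x hx
    obtain ⟨y, hy, rfl⟩ := Finset.mem_image.mp hx
    simp only [hTdef, Finset.mem_filter, Finset.mem_univ, true_and] at hy
    simp only [hSdef, Finset.mem_filter, Finset.mem_univ, true_and]
    exact hg y hy.1 hy.2
  have hne : (bigS \ T.image g).Nonempty := by
    rw [Finset.sdiff_nonempty]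
    intro hsub
    have h1 := Finset.card_le_card hsub
    have h2 := Finset.card_image_le (s := T) (f := g)
    rw [bigS_card hn] at h1
    rw [T_card hk hn] at h2
    omega
  obtain ⟨s, hs⟩ := hne
  have hsmem := Finset.mem_sdiff.mp hs
  have hsval : (s : ℕ) < k := by
    have := hsmem.1
    simp only [hSdef, Finset.mem_filter, Finset.mem_univ, true_and] at this
    exact this
  have hsimg : ∀ x : Fin n, 1 ≤ (x : ℕ) → (x : ℕ) < k → s ≠ g x := by
    intro x h1 h2 heq
    exact hsmem.2 (Finset.mem_image.mpr ⟨x, by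
      simp only [hTdef, Finset.mem_filter, Finset.mem_univ, true_and]; exact ⟨h1, h2⟩,
      heq.symm⟩)
  have hinj : Function.Injective
      (fun i : Fin n => if (i : ℕ) = 0 then s else if (i : ℕ) < k then g i else i) := by
    intro x y hxy
    by_cases hx0 : (x : ℕ) = 0 <;> by_cases hy0 : (y : ℕ) = 0 <;>
      by_cases hxk : (x : ℕ) < k <;> by_cases hyk : (y : ℕ) < k <;>
      simp only [hx0, hy0, hxk, hyk, if_pos, if_neg, if_true, if_false, reduceIte] at hxy <;>
      first
      | (exact Fin.ext (by omega))
      | (exact g.injective hxy)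
      | (exact hxy)
      | (exact absurd hxy (hsimg y (by omega) hyk))
      | (exact absurd hxy.symm (hsimg x (by omega) hxk))
      | (exfalso; have := congrArg Fin.val hxy
         first
         | (have h3 := hg y (by omega) hyk; omega)
         | (have h3 := hg x (by omega) hxk; omega)
         | omega)
  let p : Equiv.Perm (Fin n) := Equiv.ofBijective _ (Finite.injective_iff_bijective.mp hinj)
  have hpdef : ∀ i : Fin n,
      p i = if (i : ℕ) = 0 then s else if (i : ℕ) < k then g i else i := fun i => rfl
  have hpC : ∀ i : Fin n, k ≤ (i : ℕ) → p i = i := by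
    intro i hi
    rw [hpdef, if_neg (by omega), if_neg (by omega)]
  have hpT : ∀ i : Fin n, 1 ≤ (i : ℕ) → (i : ℕ) < k → p i = g i := by
    intro i h1 h2
    rw [hpdef, if_neg (by omega), if_pos h2]
  refine ⟨p, p⁻¹ * g, hpC, ?_, by group⟩
  intro i h1 h2
  rw [Equiv.Perm.mul_apply, Equiv.Perm.inv_eq_iff_eq]
  exact (hpT i h1 h2).symm

lemma exists_tr (hk : 2 ≤ k) (hn : k ≤ n) (g : Equiv.Perm (Fin n)) (i0 : Fin n)
    (h1 : 1 ≤ (i0 : ℕ)) (h2 : (i0 : ℕ) < k) (h3 : k ≤ ((g i0 : Fin n) : ℕ)) :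
    ∃ u v : Fin n, u ≠ v ∧ ((g u : Fin n) : ℕ) < k ∧ ((g v : Fin n) : ℕ) < k ∧
      ¬(1 ≤ (u : ℕ) ∧ (u : ℕ) < k) ∧ ¬(1 ≤ (v : ℕ) ∧ (v : ℕ) < k) := by
  set A := Finset.univ.filter (fun x : Fin n => ((g x : Fin n) : ℕ) < k) with hAdef
  set B := A.filter (fun x : Fin n => 1 ≤ (x : ℕ) ∧ (x : ℕ) < k) with hBdef
  have hAcard : A.card = k := by
    have : A = Finset.image (⇑g⁻¹) (Finset.univ.filter (fun i : Fin n => (i : ℕ) < k)) := by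
      ext x
      simp only [hAdef, Finset.mem_filter, Finset.mem_univ, true_and, Finset.mem_image]
      constructor
      · intro h; exact ⟨g x, h, by simp⟩
      · rintro ⟨y, hy, rfl⟩; simpa using hy
    rw [this, Finset.card_image_of_injective _ g⁻¹.injective, bigS_card hn]
  have hBsub : B ⊆ (Finset.univ.filter
      (fun i : Fin n => 1 ≤ (i : ℕ) ∧ (i : ℕ) < k)).erase i0 := by
    intro x hx
    simp only [hBdef, hAdef, Finset.mem_filter, Finset.mem_univ, true_and] at hx
    simp only [Finset.mem_erase, Finset.mem_filter, Finset.mem_univ, true_and]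
    refine ⟨fun h => ?_, hx.2⟩
    subst h
    omega
  have hBcard : B.card ≤ k - 2 := by
    have h4 := Finset.card_le_card hBsub
    have h5 : i0 ∈ Finset.univ.filter (fun i : Fin n => 1 ≤ (i : ℕ) ∧ (i : ℕ) < k) := by
      simp only [Finset.mem_filter, Finset.mem_univ, true_and]; exact ⟨h1, h2⟩
    rw [Finset.card_erase_of_mem h5, T_card hk hn] at h4
    omega
  have hD : 1 < (A \ B).card := by
    have hsub : B ⊆ A := by rw [hBdef]; exact Finset.filter_subset _ _
    rw [Finset.card_sdiff_of_subset hsub, hAcard]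
    omega
  obtain ⟨u, hu, v, hv, huv⟩ := Finset.one_lt_card.mp hD
  rw [Finset.mem_sdiff] at hu hv
  have hu1 := hu.1
  have hv1 := hv.1
  simp only [hAdef, Finset.mem_filter, Finset.mem_univ, true_and] at hu1 hv1
  have hu2 : ¬(1 ≤ (u : ℕ) ∧ (u : ℕ) < k) := by
    intro h
    exact hu.2 (by simp only [hBdef, Finset.mem_filter]; exact ⟨hu.1, h⟩)
  have hv2 : ¬(1 ≤ (v : ℕ) ∧ (v : ℕ) < k) := by
    intro h
    exact hv.2 (by simp only [hBdef, Finset.mem_filter]; exact ⟨hv.1, h⟩)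
  exact ⟨u, v, huv, hu1, hv1, hu2, hv2⟩

lemma key_single (hk : 2 ≤ k) (hn : k ≤ n) (g : Equiv.Perm (Fin n)) :
    ∃ μ : ℚ, hookA n k * MonoidAlgebra.single g 1 * hookB n k
      = μ • (hookA n k * hookB n k) := by
  by_cases hg : ∀ i : Fin n, 1 ≤ (i : ℕ) → (i : ℕ) < k → ((g i : Fin n) : ℕ) < k
  · obtain ⟨p, q, hp, hq, rfl⟩ := exists_pq hk hn g hg
    refine ⟨((Equiv.Perm.sign p : ℤ) : ℚ), ?_⟩
    have h1 : (MonoidAlgebra.single (p * q) (1 : ℚ))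
        = MonoidAlgebra.single p 1 * MonoidAlgebra.single q 1 := by
      rw [MonoidAlgebra.single_mul_single, mul_one]
    rw [h1, ← mul_assoc, hookA_mul_single p hp, smul_mul_assoc, smul_mul_assoc,
      mul_assoc, single_mul_hookB q hq]
  · push_neg at hg
    obtain ⟨i0, hi1, hi2, hi3⟩ := hg
    obtain ⟨u, v, huv, hgu, hgv, hu, hv⟩ := exists_tr hk hn g i0 hi1 hi2 hi3
    refine ⟨0, ?_⟩
    set t := Equiv.swap (g u) (g v) with htdef
    set r := Equiv.swap u v with hrdef
    have htC : ∀ i : Fin n, k ≤ (i : ℕ) → t i = i := by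
      intro i hi
      refine Equiv.swap_apply_of_ne_of_ne ?_ ?_ <;>
        intro h <;> rw [h] at hi <;> omega
    have hrR : ∀ i : Fin n, 1 ≤ (i : ℕ) → (i : ℕ) < k → r i = i := by
      intro i hi1' hi2'
      refine Equiv.swap_apply_of_ne_of_ne ?_ ?_ <;>
        intro h <;> rw [h] at hi1' hi2' <;> omega
    have hguv : g u ≠ g v := fun h => huv (g.injective h)
    have hta : hookA n k * MonoidAlgebra.single t 1 = -(hookA n k) := by
      rw [hookA_mul_single t htC, htdef, Equiv.Perm.sign_swap hguv]
      norm_num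
    have hrb : MonoidAlgebra.single r 1 * hookB n k = hookB n k := single_mul_hookB r hrR
    have htg : t * g = g * r := (Equiv.mul_swap_eq_swap_mul g u v).symm
    have e1 : (MonoidAlgebra.single g (1 : ℚ))
        = MonoidAlgebra.single t 1 * (MonoidAlgebra.single g 1 * MonoidAlgebra.single r 1) := by
      rw [MonoidAlgebra.single_mul_single, MonoidAlgebra.single_mul_single, mul_one, mul_one]
      congr 1
      rw [← htg, ← mul_assoc, htdef, Equiv.swap_mul_self, one_mul]
    have key2 : hookA n k * MonoidAlgebra.single g 1 * hookB n k
        = -(hookA n k * MonoidAlgebra.single g 1 * hookB n k) := by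
      conv_lhs => rw [e1]
      rw [← mul_assoc, hta, mul_assoc, mul_assoc, hrb, neg_mul, ← mul_assoc]
    have h2 : (2 : ℚ) • (hookA n k * MonoidAlgebra.single g 1 * hookB n k) = 0 := by
      rw [two_smul]
      nth_rewrite 2 [key2]
      exact add_neg_cancel _
    have h3 := (smul_eq_zero.mp h2).resolve_left (by norm_num)
    rw [h3, zero_smul]

lemma key_all (hk : 2 ≤ k) (hn : k ≤ n) (x : MonoidAlgebra ℚ (Equiv.Perm (Fin n))) :
    ∃ μ : ℚ, hookA n k * x * hookB n k = μ • (hookA n k * hookB n k) := by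
  induction x using MonoidAlgebra.induction_on with
  | of g =>
      obtain ⟨μ, hμ⟩ := key_single hk hn g
      exact ⟨μ, by rw [MonoidAlgebra.of_apply]; exact hμ⟩
  | add f g hf hg =>
      obtain ⟨μ1, h1⟩ := hf
      obtain ⟨μ2, h2⟩ := hg
      refine ⟨μ1 + μ2, ?_⟩
      rw [mul_add, add_mul, h1, h2, add_smul]
  | smul r f hf =>
      obtain ⟨μ, h1⟩ := hf
      refine ⟨r * μ, ?_⟩
      rw [mul_smul_comm, smul_mul_assoc, h1, smul_smul]

lemma hookAB_apply_one (hk : 2 ≤ k) (hn : k ≤ n) :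
    (hookA n k * hookB n k).coeff 1 = 1 := by
  haveI : NeZero n := ⟨by omega⟩
  have hexp : hookA n k * hookB n k
      = ∑ σ ∈ Finset.univ.filter
          (fun σ : Equiv.Perm (Fin n) => ∀ i : Fin n, k ≤ (i : ℕ) → σ i = i),
        ∑ τ ∈ Finset.univ.filter
          (fun τ : Equiv.Perm (Fin n) => ∀ i : Fin n, 1 ≤ (i : ℕ) → (i : ℕ) < k → τ i = i),
          MonoidAlgebra.single (σ * τ) ((Equiv.Perm.sign σ : ℤ) : ℚ) := by
    unfold hookA hookB
    rw [Finset.sum_mul]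
    simp_rw [Finset.mul_sum, MonoidAlgebra.single_mul_single, mul_one]
  rw [hexp]
  rw [MonoidAlgebra.coeff_sum, Finset.sum_apply']
  rw [Finset.sum_eq_single_of_mem (1 : Equiv.Perm (Fin n)) (by simp)]
  · rw [MonoidAlgebra.coeff_sum, Finset.sum_apply', Finset.sum_eq_single_of_mem (1 : Equiv.Perm (Fin n)) (by simp)]
    · simp [MonoidAlgebra.single_apply]
    · intro τ hτ hτ1
      rw [MonoidAlgebra.single_apply, if_neg (by simpa using hτ1)]
  · intro σ hσ hσ1
    simp only [Finset.mem_filter, Finset.mem_univ, true_and] at hσ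
    rw [MonoidAlgebra.coeff_sum, Finset.sum_apply']
    refine Finset.sum_eq_zero (fun τ hτ => ?_)
    simp only [Finset.mem_filter, Finset.mem_univ, true_and] at hτ
    rw [MonoidAlgebra.single_apply, if_neg]
    intro hστ
    apply hσ1
    have hτinv : τ = σ⁻¹ := (inv_eq_of_mul_eq_one_right hστ).symm
    have hfix : ∀ i : Fin n, (i : ℕ) ≠ 0 → σ i = i := by
      intro i hi0
      by_cases hik : k ≤ (i : ℕ)
      · exact hσ i hik
      · have hτi : τ i = i := hτ i (by omega) (by omega)
        rw [hτinv] at hτi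
        have h5 := congrArg σ hτi
        rw [← Equiv.Perm.mul_apply, mul_inv_cancel, Equiv.Perm.one_apply] at h5
        exact h5.symm
    have hzero : σ 0 = 0 := by
      by_contra hj
      have hval : ((σ 0 : Fin n) : ℕ) ≠ 0 := by
        intro h
        exact hj (Fin.ext (by simpa using h))
      have := hfix (σ 0) hval
      have h0 := σ.injective this
      exact hj h0
    apply Equiv.ext
    intro i
    by_cases h : (i : ℕ) = 0
    · have : i = 0 := Fin.ext (by simpa using h)
      rw [this, hzero]; rfl
    · rw [hfix i h]; rfl

end HookLemmas

/-- The left ideal `ℚ[Σₙ]·(a·b)` is a simple module over the group algebra `ℚ[Σₙ]`: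
it is the irreducible representation of hook type. -/
theorem hook_ideal_isSimpleModule (n k : ℕ) (hk : 2 ≤ k) (hn : k ≤ n) :
    IsSimpleModule (MonoidAlgebra ℚ (Equiv.Perm (Fin n)))
      ↥(Submodule.span (MonoidAlgebra ℚ (Equiv.Perm (Fin n))) {hookA n k * hookB n k}) := by
  classical
  haveI : NeZero ((Fintype.card (Equiv.Perm (Fin n)) : ℚ)) :=
    ⟨Nat.cast_ne_zero.mpr Fintype.card_ne_zero⟩
  set c := hookA n k * hookB n k with hc
  have hcne : c ≠ 0 := by
    intro h0
    have h1 := hookAB_apply_one (n := n) (k := k) hk hn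
    rw [← hc, h0] at h1
    simp at h1
  rw [isSimpleModule_iff_isAtom]
  constructor
  · rw [ne_eq, Submodule.span_singleton_eq_bot]
    exact hcne
  · intro W hW
    by_cases hcw : ∀ w ∈ W, c * w = 0
    · obtain ⟨W', hcompl⟩ := MonoidAlgebra.Submodule.exists_isCompl W
      have h1top : (1 : MonoidAlgebra ℚ (Equiv.Perm (Fin n))) ∈ W ⊔ W' := by
        rw [hcompl.sup_eq_top]; trivial
      obtain ⟨e, he, f, hf, hef⟩ := Submodule.mem_sup.mp h1top
      rw [eq_bot_iff]
      intro w hw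
      have hwspan : w ∈ Submodule.span (MonoidAlgebra ℚ (Equiv.Perm (Fin n))) {c} := hW.le hw
      obtain ⟨y, hy⟩ := Submodule.mem_span_singleton.mp hwspan
      have hwe : w * e = 0 := by
        rw [← hy, smul_eq_mul, mul_assoc, hcw e he, mul_zero]
      have hwf : w * f ∈ W' := W'.smul_mem w hf
      have hwwf : w = w * f := by
        conv_lhs => rw [← mul_one w, ← hef]
        rw [mul_add, hwe, zero_add]
      rw [hwwf]
      have hmem : w * f ∈ W := hwwf ▸ hw
      have h0 : w * f ∈ W ⊓ W' := ⟨hmem, hwf⟩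
      rw [hcompl.inf_eq_bot] at h0
      exact h0
    · exfalso
      push_neg at hcw
      obtain ⟨w, hwW, hcw0⟩ := hcw
      obtain ⟨y, hy⟩ := Submodule.mem_span_singleton.mp (hW.le hwW)
      obtain ⟨μ, hμ⟩ := key_all hk hn (hookB n k * y * hookA n k)
      have hcyc : c * w = μ • c := by
        rw [← hy, smul_eq_mul, hc, ← hμ]
        simp only [mul_assoc]
      have hμ0 : μ ≠ 0 := by
        intro h0
        rw [h0, zero_smul] at hcyc
        exact hcw0 hcyc
      have hc_in : c ∈ W := by
        have h1 : ((μ⁻¹ • c) : MonoidAlgebra ℚ (Equiv.Perm (Fin n))) • w ∈ W :=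
          W.smul_mem _ hwW
      
        have h2 : ((μ⁻¹ • c) : MonoidAlgebra ℚ (Equiv.Perm (Fin n))) • w = c := by
          rw [smul_eq_mul, smul_mul_assoc, hcyc, smul_smul, inv_mul_cancel₀ hμ0, one_smul]
        rwa [h2] at h1
      exact hW.not_ge (Submodule.span_le.mpr (Set.singleton_subset_iff.mpr hc_in))
end
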